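/- arXiv:1109.6687 — 3 statements merged into one kernel-verified Lean document; each statement's English description precedes it below -/
import Mathlib

section
/- Let f : P → Q be a surjective order-preserving map from a finite lattice P to a finite poset Q admitting an order-preserving section g : Q → P with f ∘ g = id, and suppose every fiber f⁻¹(q) is an interval of P. Then Q is a lattice. -/
/-- If `f : P → Q` is a surjective order-preserving map from a finite lattice `P`
to a finite poset `Q`, admitting an order-preserving section `g` with `f ∘ g = id`,
and every fiber of `f` is an interval of `P`, then `Q` is a lattice
(every pair of elements has a least upper bound and a greatest lower bound). -/
theorem interval_retract_lattice {P Q : Type*} [Lattice P] [Finite P]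
    [PartialOrder Q] [Finite Q] (f : P → Q) (g : Q → P)
    (hsurj : Function.Surjective f) (hf : Monotone f) (hg : Monotone g)
    (hsec : ∀ q, f (g q) = q)
    (hfib : ∀ q : Q, ∃ a b : P, a ≤ b ∧ f ⁻¹' {q} = Set.Icc a b) :
    ∀ x y : Q, (∃ z, IsLUB {x, y} z) ∧ (∃ z, IsGLB {x, y} z) := by
  intro x y
  constructor
  · refine ⟨f (g x ⊔ g y), ?_, ?_⟩
    · rintro q (rfl | rfl)
      · calc q = f (g q) := (hsec q).symm
          _ ≤ f (g q ⊔ g y) := hf le_sup_left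
      · calc q = f (g q) := (hsec q).symm
          _ ≤ f (g x ⊔ g q) := hf le_sup_right
    · intro z hz
      have hx : x ≤ z := hz (by simp)
      have hy : y ≤ z := hz (by simp)
      have h : g x ⊔ g y ≤ g z := sup_le (hg hx) (hg hy)
      calc f (g x ⊔ g y) ≤ f (g z) := hf h
        _ = z := hsec z
  · refine ⟨f (g x ⊓ g y), ?_, ?_⟩
    · rintro q (rfl | rfl)
      · calc f (g q ⊓ g y) ≤ f (g q) := hf inf_le_left
          _ = q := hsec q
      · calc f (g x ⊓ g q) ≤ f (g q) := hf inf_le_right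
          _ = q := hsec q
    · intro z hz
      have hx : z ≤ x := hz (by simp)
      have hy : z ≤ y := hz (by simp)
      have h : g z ≤ g x ⊓ g y := le_inf (hg hx) (hg hy)
      calc z = f (g z) := (hsec z).symm
        _ ≤ f (g x ⊓ g y) := hf h
end

section
/- Let f : P → Q be an interval retract from a finite lattice P onto a finite lattice Q. Then the Möbius functions satisfy μ_Q(x,y) = Σ_{a,b : f(a)=x, f(b)=y} μ_P(a,b) for all x, y in Q. -/
open scoped Classical

open Finset

noncomputable def muRel {α : Type*} [Fintype α] [PartialOrder α] (S : Set α) (a b : α) : ℤ :=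
  if a ∈ S ∧ b ∈ S ∧ a ≤ b then
    (if a = b then 1 else 0) -
      ∑ c ∈ (Finset.univ.filter (fun c => c ∈ S ∧ a ≤ c ∧ c < b)).attach,
        muRel S a c.1
  else 0
termination_by (Finset.univ.filter (fun c => c < b)).card
decreasing_by
  apply Finset.card_lt_card
  have hc := c.2
  simp only [Finset.mem_filter] at hc
  constructor
  · intro x hx
    simp only [Finset.mem_filter, Finset.mem_univ, true_and] at hx ⊢
    exact hx.trans hc.2.2.2
  · intro h
    have := h (Finset.mem_filter.2 ⟨Finset.mem_univ _, hc.2.2.2⟩)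
    simp only [Finset.mem_filter] at this
    exact lt_irrefl _ this.2

theorem muRel_of_not {α : Type*} [Fintype α] [PartialOrder α] {S : Set α} {a b : α}
    (h : ¬ (a ∈ S ∧ b ∈ S ∧ a ≤ b)) : muRel S a b = 0 := by
  rw [muRel, if_neg h]

theorem muRel_rec {α : Type*} [Fintype α] [PartialOrder α] {S : Set α} {a b : α}
    (ha : a ∈ S) (hb : b ∈ S) (hab : a ≤ b) :
    (∑ c ∈ Finset.univ.filter (fun c => c ∈ S ∧ a ≤ c ∧ c ≤ b), muRel S a c) =
      if a = b then 1 else 0 := by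
  have hsplit : Finset.univ.filter (fun c => c ∈ S ∧ a ≤ c ∧ c ≤ b) =
      insert b (Finset.univ.filter (fun c => c ∈ S ∧ a ≤ c ∧ c < b)) := by
    ext c
    simp only [Finset.mem_filter, Finset.mem_insert, Finset.mem_univ, true_and]
    constructor
    · rintro ⟨h1, h2, h3⟩
      rcases eq_or_lt_of_le h3 with h | h
      · exact Or.inl h
      · exact Or.inr ⟨h1, h2, h⟩
    · rintro (rfl | ⟨h1, h2, h3⟩)
      · exact ⟨hb, hab, le_refl _⟩
      · exact ⟨h1, h2, h3.le⟩
  rw [hsplit, Finset.sum_insert (by simp)]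
  conv_lhs => rw [muRel, if_pos ⟨ha, hb, hab⟩]
  rw [Finset.sum_attach _ (fun c => muRel S a c)]
  ring

theorem sum_filter_zext {α : Type*} [Fintype α] {p q : α → Prop} [DecidablePred p] [DecidablePred q] (F : α → ℤ)
    (hpq : ∀ a, p a → q a) (hz : ∀ a, q a → ¬ p a → F a = 0) :
    ∑ a ∈ Finset.univ.filter (fun a => q a), F a
      = ∑ a ∈ Finset.univ.filter (fun a => p a), F a := by
  apply (Finset.sum_subset ?_ ?_).symm
  · intro a haa
    simp only [Finset.mem_filter, Finset.mem_univ, true_and] at haa ⊢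
    exact hpq a haa
  · intro a h1 h2
    simp only [Finset.mem_filter, Finset.mem_univ, true_and] at h1 h2
    exact hz a h1 h2

theorem insert_top_filter {α : Type*} [Fintype α] [PartialOrder α] (S : Set α) (a b : α)
    (hb : b ∈ S) (hab : a ≤ b) :
    Finset.univ.filter (fun c => c ∈ S ∧ a ≤ c ∧ c ≤ b) =
      insert b (Finset.univ.filter (fun c => c ∈ S ∧ a ≤ c ∧ c < b)) := by
  ext c
  simp only [Finset.mem_filter, Finset.mem_insert, Finset.mem_univ, true_and]
  constructor
  · rintro ⟨h1, h2, h3⟩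
    rcases eq_or_lt_of_le h3 with h | h
    · exact Or.inl h
    · exact Or.inr ⟨h1, h2, h⟩
  · rintro (rfl | ⟨h1, h2, h3⟩)
    · exact ⟨hb, hab, le_refl _⟩
    · exact ⟨h1, h2, h3.le⟩

theorem insert_bot_filter {α : Type*} [Fintype α] [PartialOrder α] (S : Set α) (a b : α)
    (ha : a ∈ S) (hab : a ≤ b) :
    Finset.univ.filter (fun c => c ∈ S ∧ a ≤ c ∧ c ≤ b) =
      insert a (Finset.univ.filter (fun c => c ∈ S ∧ a < c ∧ c ≤ b)) := by
  ext c
  simp only [Finset.mem_filter, Finset.mem_insert, Finset.mem_univ, true_and]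
  constructor
  · rintro ⟨h1, h2, h3⟩
    rcases eq_or_lt_of_le h2 with h | h
    · exact Or.inl h.symm
    · exact Or.inr ⟨h1, h, h3⟩
  · rintro (rfl | ⟨h1, h2, h3⟩)
    · exact ⟨ha, le_refl _, hab⟩
    · exact ⟨h1, h2.le, h3⟩

theorem leftRec {α : Type*} [Fintype α] [PartialOrder α] (S : Set α) (μ : α → α → ℤ)
    (h0 : ∀ a b, ¬ (a ∈ S ∧ b ∈ S ∧ a ≤ b) → μ a b = 0)
    (hrec : ∀ a b, a ∈ S → b ∈ S → a ≤ b →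
      (∑ c ∈ Finset.univ.filter (fun c => c ∈ S ∧ a ≤ c ∧ c ≤ b), μ a c) =
        if a = b then 1 else 0) :
    ∀ a b, a ∈ S → b ∈ S → a ≤ b →
      (∑ c ∈ Finset.univ.filter (fun c => c ∈ S ∧ a ≤ c ∧ c ≤ b), μ c b) =
        if a = b then 1 else 0 := by
  set M : Matrix α α ℤ := Matrix.of (fun a b => if a ∈ S then μ a b else if a = b then 1 else 0)
    with hM
  set Z : Matrix α α ℤ := Matrix.of (fun a b =>
    if a = b then 1 else if a ∈ S ∧ b ∈ S ∧ a ≤ b then 1 else 0) with hZ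
  have hMZ : M * Z = 1 := by
    ext a b
    rw [Matrix.mul_apply, Matrix.one_apply]
    by_cases ha : a ∈ S
    · have key : ∀ c, M a c * Z c b = (if c = b then M a c else 0) +
          (if c ≠ b ∧ c ∈ S ∧ b ∈ S ∧ c ≤ b then μ a c else 0) := by
        intro c
        simp only [hM, hZ, Matrix.of_apply]
        by_cases hcb : c = b
        · subst hcb; simp [ha]
        · by_cases h2 : c ∈ S ∧ b ∈ S ∧ c ≤ b
          · have h3 : c ≠ b ∧ c ∈ S ∧ b ∈ S ∧ c ≤ b := ⟨hcb, h2⟩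
            simp [ha, hcb, h2, h3]
          · have h3 : ¬ (c ≠ b ∧ c ∈ S ∧ b ∈ S ∧ c ≤ b) := fun hh => h2 hh.2
            simp [hcb, h2, h3]
      rw [Finset.sum_congr rfl (fun c _ => key c), Finset.sum_add_distrib,
        Finset.sum_ite_eq' Finset.univ b (fun c => M a c), if_pos (Finset.mem_univ _)]
      by_cases hb : b ∈ S
      · have e1 : (∑ c, if c ≠ b ∧ c ∈ S ∧ b ∈ S ∧ c ≤ b then μ a c else 0)
            = ∑ c ∈ Finset.univ.filter (fun c => c ∈ S ∧ a ≤ c ∧ c < b), μ a c := by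
          rw [Finset.sum_filter]
          apply Finset.sum_congr rfl
          intro c _
          by_cases h : c ∈ S ∧ a ≤ c ∧ c < b
          · rw [if_pos ⟨h.2.2.ne, h.1, hb, h.2.2.le⟩, if_pos h]
          · by_cases h2 : c ≠ b ∧ c ∈ S ∧ b ∈ S ∧ c ≤ b
            · rw [if_pos h2, if_neg h]
              apply h0
              intro hx
              exact h ⟨h2.2.1, hx.2.2, lt_of_le_of_ne h2.2.2.2 h2.1⟩
            · rw [if_neg h2, if_neg h]
        rw [e1]
        have hMab : M a b = μ a b := if_pos ha
        rw [hMab]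
        by_cases hab : a ≤ b
        · have := hrec a b ha hb hab
          rw [insert_top_filter S a b hb hab, Finset.sum_insert (by simp)] at this
          linarith [this]
        · have hne : a ≠ b := fun h => hab (le_of_eq h)
          rw [if_neg hne]
          have z1 : μ a b = 0 := h0 a b (fun hx => hab hx.2.2)
          have z2 : (∑ c ∈ Finset.univ.filter (fun c => c ∈ S ∧ a ≤ c ∧ c < b), μ a c) = 0 := by
            apply Finset.sum_eq_zero
            intro c hc
            simp only [Finset.mem_filter, Finset.mem_univ, true_and] at hc
            exact absurd (hc.2.1.trans hc.2.2.le) hab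
          rw [z1, z2, add_zero]
      · have e1 : (∑ c, if c ≠ b ∧ c ∈ S ∧ b ∈ S ∧ c ≤ b then μ a c else 0) = 0 := by
          apply Finset.sum_eq_zero
          intro c _
          exact if_neg (fun hh => hb hh.2.2.1)
        have hMab : M a b = 0 := by
          rw [hM]
          simp only [Matrix.of_apply, if_pos ha]
          exact h0 a b (fun hx => hb hx.2.1)
        have hne : a ≠ b := fun h => hb (h ▸ ha)
        rw [e1, hMab, if_neg hne, add_zero]
    · have key : ∀ c, M a c * Z c b = if c = a then Z a b else 0 := by
        intro c
        simp only [hM, Matrix.of_apply, if_neg ha]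
        by_cases h : c = a
        · subst h; rw [if_pos rfl, if_pos rfl, one_mul]
        · rw [if_neg (fun hh => h hh.symm), if_neg h, zero_mul]
      rw [Finset.sum_congr rfl (fun c _ => key c),
        Finset.sum_ite_eq' Finset.univ a (fun _ => Z a b), if_pos (Finset.mem_univ _)]
      rw [hZ]
      simp only [Matrix.of_apply]
      by_cases hab : a = b
      · rw [if_pos hab, if_pos hab]
      · rw [if_neg hab, if_neg hab, if_neg (fun hh => ha hh.1)]
  have hZM : Z * M = 1 := mul_eq_one_comm.mp hMZ
  intro a b ha hb hab
  have hent := congrFun (congrFun hZM a) b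
  rw [Matrix.mul_apply, Matrix.one_apply] at hent
  have key : ∀ c, Z a c * M c b = (if c = a then μ a b else 0) +
      (if c ≠ a ∧ c ∈ S ∧ a < c ∧ c ≤ b then μ c b else 0) := by
    intro c
    simp only [hZ, hM, Matrix.of_apply]
    by_cases hca : c = a
    · subst hca
      rw [if_pos rfl, if_pos rfl, if_pos ha, one_mul,
        if_neg (fun hh : c ≠ c ∧ _ => hh.1 rfl), add_zero]
    · rw [if_neg (fun hh => hca hh.symm), if_neg hca]
      by_cases h2 : c ∈ S ∧ a ≤ c
      · rw [if_pos ⟨ha, h2.1, h2.2⟩, if_pos h2.1, one_mul]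
        by_cases h3 : c ≤ b
        · rw [if_pos ⟨hca, h2.1, lt_of_le_of_ne h2.2 (fun hh => hca hh.symm), h3⟩, zero_add]
        · rw [if_neg (fun hh => h3 hh.2.2.2), zero_add]
          exact h0 c b (fun hx => h3 hx.2.2)
      · rw [if_neg (fun hh => h2 ⟨hh.2.1, hh.2.2⟩), zero_mul,
          if_neg (fun hh => h2 ⟨hh.2.1, hh.2.2.1.le⟩), add_zero]
  rw [Finset.sum_congr rfl (fun c _ => key c), Finset.sum_add_distrib,
    Finset.sum_ite_eq' Finset.univ a (fun _ => μ a b), if_pos (Finset.mem_univ _)] at hent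
  have e1 : (∑ c, if c ≠ a ∧ c ∈ S ∧ a < c ∧ c ≤ b then μ c b else 0)
      = ∑ c ∈ Finset.univ.filter (fun c => c ∈ S ∧ a < c ∧ c ≤ b), μ c b := by
    rw [Finset.sum_filter]
    apply Finset.sum_congr rfl
    intro c _
    by_cases h : c ∈ S ∧ a < c ∧ c ≤ b
    · rw [if_pos ⟨h.2.1.ne', h⟩, if_pos h]
    · rw [if_neg (fun hh => h hh.2), if_neg h]
  rw [e1] at hent
  rw [insert_bot_filter S a b ha hab, Finset.sum_insert (by simp)]
  exact hent

theorem closureCL {α : Type*} [Fintype α] [PartialOrder α] (S T : Set α) (c : α → α)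
    (hTS : T ⊆ S)
    (hle : ∀ a, a ∈ S → a ≤ c a)
    (hcT : ∀ a, a ∈ S → c a ∈ T)
    (hmono : ∀ a b, a ∈ S → b ∈ S → a ≤ b → c a ≤ c b)
    (hfix : ∀ a, a ∈ T → c a = a)
    (μS μT : α → α → ℤ)
    (hS0 : ∀ a b, ¬ (a ∈ S ∧ b ∈ S ∧ a ≤ b) → μS a b = 0)
    (hSrec : ∀ a b, a ∈ S → b ∈ S → a ≤ b →
      (∑ d ∈ Finset.univ.filter (fun d => d ∈ S ∧ a ≤ d ∧ d ≤ b), μS a d) =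
        if a = b then 1 else 0)
    (hT0 : ∀ a b, ¬ (a ∈ T ∧ b ∈ T ∧ a ≤ b) → μT a b = 0)
    (hTrec : ∀ a b, a ∈ T → b ∈ T → a ≤ b →
      (∑ d ∈ Finset.univ.filter (fun d => d ∈ T ∧ a ≤ d ∧ d ≤ b), μT a d) =
        if a = b then 1 else 0) :
    ∀ w, w ∈ T → ∀ a, a ∈ S →
      (∑ b ∈ Finset.univ.filter (fun b => b ∈ S ∧ a ≤ b ∧ c b = w), μS a b)
        = if a ∈ T then μT a w else 0 := by
  intro w
  induction w using WellFoundedLT.induction with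
  | _ w ih =>
  intro hw a ha
  by_cases haw : a ≤ w
  case neg =>
    have hempty : Finset.univ.filter (fun b => b ∈ S ∧ a ≤ b ∧ c b = w) = ∅ := by
      rw [Finset.filter_eq_empty_iff]
      rintro b - ⟨h1, h2, h3⟩
      exact haw (h2.trans (h3 ▸ hle b h1))
    rw [hempty, Finset.sum_empty]
    by_cases haT : a ∈ T
    · rw [if_pos haT, hT0 a w (fun hx => haw hx.2.2)]
    · rw [if_neg haT]
  case pos =>
    have hws : w ∈ S := hTS hw
    have base := hSrec a w ha hws haw
    have hfibs : ∑ w' ∈ Finset.univ.filter (fun w' => w' ∈ T ∧ a ≤ w' ∧ w' ≤ w),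
        (∑ b ∈ (Finset.univ.filter (fun b => b ∈ S ∧ a ≤ b ∧ b ≤ w)).filter
          (fun b => c b = w'), μS a b)
        = ∑ b ∈ Finset.univ.filter (fun b => b ∈ S ∧ a ≤ b ∧ b ≤ w), μS a b := by
      apply Finset.sum_fiberwise_of_maps_to
      intro b hb
      simp only [Finset.mem_filter, Finset.mem_univ, true_and] at hb ⊢
      exact ⟨hcT b hb.1, hb.2.1.trans (hle b hb.1),
        (hfix w hw) ▸ hmono b w hb.1 hws hb.2.2⟩
    have hinner : ∀ w' ∈ Finset.univ.filter (fun w' => w' ∈ T ∧ a ≤ w' ∧ w' ≤ w),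
        (Finset.univ.filter (fun b => b ∈ S ∧ a ≤ b ∧ b ≤ w)).filter (fun b => c b = w')
          = Finset.univ.filter (fun b => b ∈ S ∧ a ≤ b ∧ c b = w') := by
      intro w' hw'
      simp only [Finset.mem_filter, Finset.mem_univ, true_and] at hw'
      ext b
      simp only [Finset.mem_filter, Finset.mem_univ, true_and]
      constructor
      · rintro ⟨⟨h1, h2, _⟩, h4⟩
        exact ⟨h1, h2, h4⟩
      · rintro ⟨h1, h2, h3⟩
        exact ⟨⟨h1, h2, (h3 ▸ hle b h1).trans hw'.2.2⟩, h3⟩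
    have base2 : ∑ w' ∈ Finset.univ.filter (fun w' => w' ∈ T ∧ a ≤ w' ∧ w' ≤ w),
        (∑ b ∈ Finset.univ.filter (fun b => b ∈ S ∧ a ≤ b ∧ c b = w'), μS a b)
        = if a = w then 1 else 0 := by
      rw [← base, ← hfibs]
      exact Finset.sum_congr rfl (fun w' hw' => by rw [hinner w' hw'])
    rw [insert_top_filter T a w hw haw, Finset.sum_insert (by simp)] at base2
    have hih : ∑ w' ∈ Finset.univ.filter (fun w' => w' ∈ T ∧ a ≤ w' ∧ w' < w),
        (∑ b ∈ Finset.univ.filter (fun b => b ∈ S ∧ a ≤ b ∧ c b = w'), μS a b)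
        = ∑ w' ∈ Finset.univ.filter (fun w' => w' ∈ T ∧ a ≤ w' ∧ w' < w),
            (if a ∈ T then μT a w' else 0) := by
      apply Finset.sum_congr rfl
      intro w' hw'
      simp only [Finset.mem_filter, Finset.mem_univ, true_and] at hw'
      exact ih w' hw'.2.2 hw'.1 a ha
    rw [hih] at base2
    by_cases haT : a ∈ T
    · simp only [if_pos haT] at base2 ⊢
      have htr := hTrec a w haT hw haw
      rw [insert_top_filter T a w hw haw, Finset.sum_insert (by simp)] at htr
      linarith
    · simp only [if_neg haT] at base2 ⊢
      have hne : a ≠ w := fun h => haT (h ▸ hw)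
      rw [if_neg hne] at base2
      simpa using base2

theorem kernelCL {α : Type*} [Fintype α] [PartialOrder α] (S T : Set α) (k : α → α)
    (hTS : T ⊆ S)
    (hle : ∀ a, a ∈ S → k a ≤ a)
    (hkT : ∀ a, a ∈ S → k a ∈ T)
    (hmono : ∀ a b, a ∈ S → b ∈ S → a ≤ b → k a ≤ k b)
    (hfix : ∀ a, a ∈ T → k a = a)
    (μS μT : α → α → ℤ)
    (hS0 : ∀ a b, ¬ (a ∈ S ∧ b ∈ S ∧ a ≤ b) → μS a b = 0)
    (hSrec : ∀ a b, a ∈ S → b ∈ S → a ≤ b →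
      (∑ d ∈ Finset.univ.filter (fun d => d ∈ S ∧ a ≤ d ∧ d ≤ b), μS d b) =
        if a = b then 1 else 0)
    (hT0 : ∀ a b, ¬ (a ∈ T ∧ b ∈ T ∧ a ≤ b) → μT a b = 0)
    (hTrec : ∀ a b, a ∈ T → b ∈ T → a ≤ b →
      (∑ d ∈ Finset.univ.filter (fun d => d ∈ T ∧ a ≤ d ∧ d ≤ b), μT d b) =
        if a = b then 1 else 0) :
    ∀ v, v ∈ T → ∀ w, w ∈ S →
      (∑ b ∈ Finset.univ.filter (fun b => b ∈ S ∧ b ≤ w ∧ k b = v), μS b w)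
        = if w ∈ T then μT v w else 0 := by
  intro v
  induction v using WellFoundedGT.induction with
  | _ v ih =>
  intro hv w hws
  by_cases hvw : v ≤ w
  case neg =>
    have hempty : Finset.univ.filter (fun b => b ∈ S ∧ b ≤ w ∧ k b = v) = ∅ := by
      rw [Finset.filter_eq_empty_iff]
      rintro b - ⟨h1, h2, h3⟩
      exact hvw ((h3 ▸ hle b h1).trans h2)
    rw [hempty, Finset.sum_empty]
    by_cases hwT : w ∈ T
    · rw [if_pos hwT, hT0 v w (fun hx => hvw hx.2.2)]
    · rw [if_neg hwT]
  case pos =>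
    have hvs : v ∈ S := hTS hv
    have base := hSrec v w hvs hws hvw
    have hfibs : ∑ v' ∈ Finset.univ.filter (fun v' => v' ∈ T ∧ v ≤ v' ∧ v' ≤ w),
        (∑ b ∈ (Finset.univ.filter (fun b => b ∈ S ∧ v ≤ b ∧ b ≤ w)).filter
          (fun b => k b = v'), μS b w)
        = ∑ b ∈ Finset.univ.filter (fun b => b ∈ S ∧ v ≤ b ∧ b ≤ w), μS b w := by
      apply Finset.sum_fiberwise_of_maps_to
      intro b hb
      simp only [Finset.mem_filter, Finset.mem_univ, true_and] at hb ⊢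
      exact ⟨hkT b hb.1, (hfix v hv) ▸ hmono v b hvs hb.1 hb.2.1,
        (hle b hb.1).trans hb.2.2⟩
    have hinner : ∀ v' ∈ Finset.univ.filter (fun v' => v' ∈ T ∧ v ≤ v' ∧ v' ≤ w),
        (Finset.univ.filter (fun b => b ∈ S ∧ v ≤ b ∧ b ≤ w)).filter (fun b => k b = v')
          = Finset.univ.filter (fun b => b ∈ S ∧ b ≤ w ∧ k b = v') := by
      intro v' hv'
      simp only [Finset.mem_filter, Finset.mem_univ, true_and] at hv'
      ext b
      simp only [Finset.mem_filter, Finset.mem_univ, true_and]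
      constructor
      · rintro ⟨⟨h1, _, h3⟩, h4⟩
        exact ⟨h1, h3, h4⟩
      · rintro ⟨h1, h2, h3⟩
        exact ⟨⟨h1, hv'.2.1.trans (h3 ▸ hle b h1), h2⟩, h3⟩
    have base2 : ∑ v' ∈ Finset.univ.filter (fun v' => v' ∈ T ∧ v ≤ v' ∧ v' ≤ w),
        (∑ b ∈ Finset.univ.filter (fun b => b ∈ S ∧ b ≤ w ∧ k b = v'), μS b w)
        = if v = w then 1 else 0 := by
      rw [← base, ← hfibs]
      exact Finset.sum_congr rfl (fun v' hv' => by rw [hinner v' hv'])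
    rw [insert_bot_filter T v w hv hvw, Finset.sum_insert (by simp)] at base2
    have hih : ∑ v' ∈ Finset.univ.filter (fun v' => v' ∈ T ∧ v < v' ∧ v' ≤ w),
        (∑ b ∈ Finset.univ.filter (fun b => b ∈ S ∧ b ≤ w ∧ k b = v'), μS b w)
        = ∑ v' ∈ Finset.univ.filter (fun v' => v' ∈ T ∧ v < v' ∧ v' ≤ w),
            (if w ∈ T then μT v' w else 0) := by
      apply Finset.sum_congr rfl
      intro v' hv'
      simp only [Finset.mem_filter, Finset.mem_univ, true_and] at hv'
      exact ih v' hv'.2.1 hv'.1 w hws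
    rw [hih] at base2
    by_cases hwT : w ∈ T
    · simp only [if_pos hwT] at base2 ⊢
      have htr := hTrec v w hv hwT hvw
      rw [insert_bot_filter T v w hv hvw, Finset.sum_insert (by simp)] at htr
      linarith
    · simp only [if_neg hwT] at base2 ⊢
      have hne : v ≠ w := fun h => hwT (h ▸ hv)
      rw [if_neg hne] at base2
      simpa using base2

/-- If `f : P → Q` is an interval retract between finite lattices (fibers are
intervals, and there is an order-preserving section `g` with `f ∘ g = id`), then
the Möbius functions of `P` and `Q` (characterized by the defining recurrence of
the Möbius function of the incidence algebra) are related by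
`μ_Q(x,y) = Σ_{f(a)=x, f(b)=y} μ_P(a,b)`. -/
theorem interval_retract_mobius {P Q : Type*} [Lattice P] [Fintype P]
    [Lattice Q] [Fintype Q] (f : P → Q) (g : Q → P)
    (hsurj : Function.Surjective f) (hf : Monotone f) (hg : Monotone g)
    (hsec : ∀ q, f (g q) = q)
    (hfib : ∀ q : Q, ∃ a b : P, a ≤ b ∧ f ⁻¹' {q} = Set.Icc a b)
    (μP : P → P → ℤ) (μQ : Q → Q → ℤ)
    (hμP0 : ∀ a b : P, ¬ a ≤ b → μP a b = 0)
    (hμP : ∀ a b : P, a ≤ b →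
      (∑ c ∈ Finset.univ.filter (fun c => a ≤ c ∧ c ≤ b), μP a c) =
        if a = b then 1 else 0)
    (hμQ0 : ∀ x y : Q, ¬ x ≤ y → μQ x y = 0)
    (hμQ : ∀ x y : Q, x ≤ y →
      (∑ z ∈ Finset.univ.filter (fun z => x ≤ z ∧ z ≤ y), μQ x z) =
        if x = y then 1 else 0) :
    ∀ x y : Q, μQ x y =
      ∑ p ∈ Finset.univ.filter (fun p : P × P => f p.1 = x ∧ f p.2 = y),
        μP p.1 p.2 := by
  classical
  choose m M hmM hIcc using hfib
  have hmem : ∀ (b : P) (q : Q), f b = q ↔ (m q ≤ b ∧ b ≤ M q) := by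
    intro b q
    constructor
    · intro h
      have hb : b ∈ f ⁻¹' {q} := by simp [h]
      rw [hIcc q] at hb
      exact hb
    · intro h
      have hb : b ∈ f ⁻¹' {q} := by rw [hIcc q]; exact h
      simpa using hb
  have hgfib : ∀ q, m q ≤ g q ∧ g q ≤ M q := fun q => (hmem (g q) q).1 (hsec q)
  set cc : P → P := fun b => b ⊔ g (f b) with hccdef
  have hfc : ∀ b, f (cc b) = f b := by
    intro b
    have h1 : m (f b) ≤ b ∧ b ≤ M (f b) := (hmem b (f b)).1 rfl
    have h2 := hgfib (f b)
    exact (hmem (cc b) (f b)).2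
      ⟨h1.1.trans le_sup_left, sup_le h1.2 h2.2⟩
  set C : Set P := {b | g (f b) ≤ b} with hCdef
  set G : Set P := Set.range g with hGdef
  have hGC : G ⊆ C := by
    rintro _ ⟨q, rfl⟩
    show g (f (g q)) ≤ g q
    rw [hsec]
  have hgfG : ∀ v, v ∈ G → g (f v) = v := by
    rintro _ ⟨q, rfl⟩
    rw [hsec]
  have hccC : ∀ b, cc b ∈ C := by
    intro b
    show g (f (cc b)) ≤ cc b
    rw [hfc]
    exact le_sup_right
  -- μC : relative Möbius function of C
  set μC : P → P → ℤ := muRel C with hμCdef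
  have hμC0 : ∀ a b, ¬ (a ∈ C ∧ b ∈ C ∧ a ≤ b) → μC a b = 0 := fun a b h => muRel_of_not h
  have hμCrec : ∀ a b, a ∈ C → b ∈ C → a ≤ b →
      (∑ d ∈ Finset.univ.filter (fun d => d ∈ C ∧ a ≤ d ∧ d ≤ b), μC a d) =
        if a = b then 1 else 0 := fun a b ha hb hab => muRel_rec ha hb hab
  have hμCrecL := leftRec C μC hμC0 hμCrec
  -- μP with `univ` forms
  have hμP0' : ∀ a b : P, ¬ (a ∈ (Set.univ : Set P) ∧ b ∈ (Set.univ : Set P) ∧ a ≤ b) →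
      μP a b = 0 := fun a b h => hμP0 a b (fun hh => h ⟨trivial, trivial, hh⟩)
  -- μQ with `univ` forms, and its left recurrence
  have hμQ0' : ∀ x y : Q, ¬ (x ∈ (Set.univ : Set Q) ∧ y ∈ (Set.univ : Set Q) ∧ x ≤ y) →
      μQ x y = 0 := fun x y h => hμQ0 x y (fun hh => h ⟨trivial, trivial, hh⟩)
  have hμQrecL := leftRec (Set.univ : Set Q) μQ hμQ0' (by
    intro x y _ _ hxy
    rw [← hμQ x y hxy]
    apply Finset.sum_congr _ (fun _ _ => rfl)
    ext z
    simp)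
  have hμQrecL' : ∀ x y : Q, x ≤ y →
      (∑ z ∈ Finset.univ.filter (fun z => x ≤ z ∧ z ≤ y), μQ z y) =
        if x = y then 1 else 0 := by
    intro x y hxy
    rw [← hμQrecL x y trivial trivial hxy]
    apply Finset.sum_congr _ (fun _ _ => rfl)
    ext z
    simp
  -- μG : Möbius function of G, pulled back from Q
  set μG : P → P → ℤ := fun v w => if v ∈ G ∧ w ∈ G then μQ (f v) (f w) else 0 with hμGdef
  have hleG : ∀ v w, v ∈ G → w ∈ G → (v ≤ w ↔ f v ≤ f w) := by
    intro v w hv hw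
    constructor
    · exact fun h => hf h
    · intro h
      have := hg h
      rwa [hgfG v hv, hgfG w hw] at this
  have hμG0 : ∀ v w, ¬ (v ∈ G ∧ w ∈ G ∧ v ≤ w) → μG v w = 0 := by
    intro v w h
    by_cases hv : v ∈ G
    · by_cases hw : w ∈ G
      · have hnle : ¬ v ≤ w := fun hh => h ⟨hv, hw, hh⟩
        rw [hμGdef]
        simp only [if_pos (⟨hv, hw⟩ : v ∈ G ∧ w ∈ G)]
        exact hμQ0 _ _ (fun hh => hnle ((hleG v w hv hw).2 hh))
      · exact if_neg (fun hh => hw hh.2)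
    · exact if_neg (fun hh => hv hh.1)
  have hQGrec : ∀ v w : P, v ∈ G → w ∈ G → v ≤ w →
      (∑ z ∈ Finset.univ.filter (fun z => f v ≤ z ∧ z ≤ f w), μQ z (f w)) =
        if v = w then 1 else 0 := by
    intro v w hv hw hvw
    rw [hμQrecL' (f v) (f w) ((hleG v w hv hw).1 hvw)]
    by_cases h : v = w
    · rw [if_pos (congrArg f h), if_pos h]
    · have hne : ¬ f v = f w := by
        intro hh
        apply h
        rw [← hgfG v hv, ← hgfG w hw, hh]
      rw [if_neg hne, if_neg h]
  -- CL1 : closure reduction from P to C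
  have hCL1 := closureCL (Set.univ : Set P) C cc (fun _ _ => trivial)
    (fun a _ => le_sup_left) (fun a _ => hccC a)
    (fun a b _ _ hab => sup_le_sup hab (hg (hf hab)))
    (fun a ha => sup_eq_left.2 ha)
    μP μC hμP0' (by
      intro a b _ _ hab
      rw [← hμP a b hab]
      apply Finset.sum_congr _ (fun _ _ => rfl)
      ext d
      simp) hμC0 hμCrec
  -- CL2 : kernel reduction from C to G
  have hCL2 := kernelCL C G (fun a => g (f a)) hGC
    (fun a ha => ha) (fun a _ => ⟨f a, rfl⟩)
    (fun a b _ _ hab => hg (hf hab))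
    (fun a ha => hgfG a ha)
    μC μG hμC0 hμCrecL hμG0 (by
      intro v w hv hw hvw
      refine Eq.trans (Finset.sum_nbij' (fun d => f d) (fun z => g z) ?_ ?_ ?_ ?_ ?_)
        (hQGrec v w hv hw hvw)
      · intro d hd
        simp only [Finset.mem_filter, Finset.mem_univ, true_and] at hd ⊢
        exact ⟨(hleG v d hv hd.1).1 hd.2.1, (hleG d w hd.1 hw).1 hd.2.2⟩
      · intro z hz
        simp only [Finset.mem_filter, Finset.mem_univ, true_and] at hz ⊢
        refine ⟨⟨z, rfl⟩, ?_, ?_⟩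
        · have h2 := hg hz.1
          rwa [hgfG v hv] at h2
        · have h2 := hg hz.2
          rwa [hgfG w hw] at h2
      · intro d hd
        simp only [Finset.mem_filter, Finset.mem_univ, true_and] at hd
        exact hgfG d hd.1
      · intro z _
        exact hsec z
      · intro d hd
        simp only [Finset.mem_filter, Finset.mem_univ, true_and] at hd
        rw [hμGdef]
        exact if_pos (⟨hd.1, hw⟩ : d ∈ G ∧ w ∈ G))
  -- Key1 : for every a and y
  have key1 : ∀ (a : P) (y : Q),
      (∑ b ∈ Finset.univ.filter (fun b => f b ≤ y), μP a b)
        = ∑ w ∈ Finset.univ.filter (fun w => w ∈ C ∧ f w ≤ y), μC a w := by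
    intro a y
    have step1 : (∑ b ∈ Finset.univ.filter (fun b => f b ≤ y), μP a b)
        = ∑ b ∈ Finset.univ.filter (fun b => a ≤ b ∧ f b ≤ y), μP a b := by
      apply sum_filter_zext (fun b => μP a b) (fun b h => h.2)
      intro b h1 h2
      exact hμP0 a b (fun hh => h2 ⟨hh, h1⟩)
    have step2 : ∑ w ∈ Finset.univ.filter (fun w => w ∈ C ∧ f w ≤ y),
        (∑ b ∈ (Finset.univ.filter (fun b => a ≤ b ∧ f b ≤ y)).filter
          (fun b => cc b = w), μP a b)
        = ∑ b ∈ Finset.univ.filter (fun b => a ≤ b ∧ f b ≤ y), μP a b := by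
      apply Finset.sum_fiberwise_of_maps_to
      intro b hb
      simp only [Finset.mem_filter, Finset.mem_univ, true_and] at hb ⊢
      exact ⟨hccC b, (hfc b).symm ▸ hb.2⟩
    rw [step1, ← step2]
    apply Finset.sum_congr rfl
    intro w hw
    simp only [Finset.mem_filter, Finset.mem_univ, true_and] at hw
    refine Eq.trans (Finset.sum_congr ?_ (fun _ _ => rfl))
      (Eq.trans (hCL1 w hw.1 a trivial) ?_)
    · ext b
      simp only [Finset.mem_filter, Finset.mem_univ, true_and, Set.mem_univ]
      constructor
      · rintro ⟨⟨h1, -⟩, h3⟩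
        exact ⟨h1, h3⟩
      · rintro ⟨h1, h3⟩
        refine ⟨⟨h1, ?_⟩, h3⟩
        rw [← hfc b, h3]
        exact hw.2
    · by_cases h : a ∈ C
      · rw [if_pos h]
      · rw [if_neg h, hμC0 a w (fun hh => h hh.1)]
  -- Key2 : for every w ∈ C and x
  have key2 : ∀ (w : P), w ∈ C → ∀ (x : Q),
      (∑ a ∈ Finset.univ.filter (fun a => f a = x), μC a w) = μG (g x) w := by
    intro w hw x
    have e1 : (∑ a ∈ Finset.univ.filter (fun a => f a = x), μC a w)
        = ∑ a ∈ Finset.univ.filter (fun a => f a = x ∧ a ∈ C ∧ a ≤ w), μC a w := by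
      apply sum_filter_zext (fun a => μC a w) (fun a h => h.1)
      intro a h1 h2
      apply hμC0
      intro hh
      exact h2 ⟨h1, hh.1, hh.2.2⟩
    have e2 : Finset.univ.filter (fun a => f a = x ∧ a ∈ C ∧ a ≤ w)
        = Finset.univ.filter (fun a => a ∈ C ∧ a ≤ w ∧ g (f a) = g x) := by
      ext a
      simp only [Finset.mem_filter, Finset.mem_univ, true_and]
      constructor
      · rintro ⟨h1, h2, h3⟩
        exact ⟨h2, h3, by rw [h1]⟩
      · rintro ⟨h2, h3, h1⟩
        refine ⟨?_, h2, h3⟩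
        have h4 := congrArg f h1
        rwa [hsec (f a), hsec x] at h4
    rw [e1, e2]
    refine Eq.trans (Finset.sum_congr ?_ (fun _ _ => rfl))
      (Eq.trans (hCL2 (g x) ⟨x, rfl⟩ w hw) ?_)
    · ext b
      simp only [Finset.mem_filter, Finset.mem_univ, true_and]
    · by_cases h : w ∈ G
      · rw [if_pos h]
      · rw [if_neg h, hμGdef]
        exact (if_neg (fun hh : g x ∈ G ∧ w ∈ G => h hh.2)).symm
  -- Key3
  have key3 : ∀ (x y : Q),
      (∑ w ∈ Finset.univ.filter (fun w => w ∈ C ∧ f w ≤ y), μG (g x) w)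
        = ∑ z ∈ Finset.univ.filter (fun z => z ≤ y), μQ x z := by
    intro x y
    have e1 : (∑ w ∈ Finset.univ.filter (fun w => w ∈ C ∧ f w ≤ y), μG (g x) w)
        = ∑ w ∈ Finset.univ.filter (fun w => w ∈ G ∧ f w ≤ y), μG (g x) w := by
      apply sum_filter_zext (fun w => μG (g x) w) (fun w h => ⟨hGC h.1, h.2⟩)
      intro w h1 h2
      have hwG : w ∉ G := fun hh => h2 ⟨hh, h1.2⟩
      exact if_neg (fun hh => hwG hh.2)
    have e2 : (∑ w ∈ Finset.univ.filter (fun w => w ∈ G ∧ f w ≤ y), μG (g x) w)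
        = ∑ z ∈ Finset.univ.filter (fun z => z ≤ y), μQ x z := by
      apply Finset.sum_nbij' (fun w => f w) (fun z => g z)
      · intro w hw
        simp only [Finset.mem_filter, Finset.mem_univ, true_and] at hw ⊢
        exact hw.2
      · intro z hz
        simp only [Finset.mem_filter, Finset.mem_univ, true_and] at hz ⊢
        refine ⟨⟨z, rfl⟩, ?_⟩
        rw [hsec]
        exact hz
      · intro w hw
        simp only [Finset.mem_filter, Finset.mem_univ, true_and] at hw
        exact hgfG w hw.1
      · intro z _
        exact hsec z
      · intro w hw
        simp only [Finset.mem_filter, Finset.mem_univ, true_and] at hw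
        rw [hμGdef]
        simp only [if_pos (⟨⟨x, rfl⟩, hw.1⟩ : g x ∈ G ∧ w ∈ G)]
        rw [hsec]
    rw [e1, e2]
  -- Key4
  have key4 : ∀ x y : Q,
      (∑ z ∈ Finset.univ.filter (fun z => z ≤ y), μQ x z) = if x = y then 1 else 0 := by
    intro x y
    by_cases hxy : x ≤ y
    · rw [sum_filter_zext (p := fun z => x ≤ z ∧ z ≤ y) (fun z => μQ x z)
        (fun z h => h.2) (fun z h1 h2 => hμQ0 x z (fun hh => h2 ⟨hh, h1⟩))]
      exact hμQ x y hxy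
    · rw [if_neg (fun h => hxy (le_of_eq h))]
      apply Finset.sum_eq_zero
      intro z hz
      simp only [Finset.mem_filter, Finset.mem_univ, true_and] at hz
      exact hμQ0 x z (fun hh => hxy (hh.trans hz))
  -- product split
  have hprod : ∀ x z : Q,
      (∑ p ∈ Finset.univ.filter (fun p : P × P => f p.1 = x ∧ f p.2 = z), μP p.1 p.2)
      = ∑ a ∈ Finset.univ.filter (fun a => f a = x),
          ∑ b ∈ Finset.univ.filter (fun b => f b = z), μP a b := by
    intro x z
    trans (∑ a : P, ∑ b : P, if f a = x ∧ f b = z then μP a b else 0)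
    · rw [← Finset.univ_product_univ, Finset.sum_filter, Finset.sum_product]
    · rw [Finset.sum_filter]
      apply Finset.sum_congr rfl
      intro a _
      by_cases h : f a = x
      · rw [if_pos h, Finset.sum_filter]
        apply Finset.sum_congr rfl
        intro b _
        by_cases h2 : f b = z
        · rw [if_pos (⟨h, h2⟩ : f a = x ∧ f b = z), if_pos h2]
        · rw [if_neg (fun hh : f a = x ∧ f b = z => h2 hh.2), if_neg h2]
      · rw [if_neg h]
        apply Finset.sum_eq_zero
        intro b _
        exact if_neg (fun hh : f a = x ∧ f b = z => h hh.1)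
  -- the core identity
  have keyCI : ∀ x y : Q,
      (∑ z ∈ Finset.univ.filter (fun z => z ≤ y),
        ∑ p ∈ Finset.univ.filter (fun p : P × P => f p.1 = x ∧ f p.2 = z), μP p.1 p.2)
      = if x = y then 1 else 0 := by
    intro x y
    calc (∑ z ∈ Finset.univ.filter (fun z => z ≤ y),
          ∑ p ∈ Finset.univ.filter (fun p : P × P => f p.1 = x ∧ f p.2 = z), μP p.1 p.2)
        = ∑ z ∈ Finset.univ.filter (fun z => z ≤ y),
            ∑ a ∈ Finset.univ.filter (fun a => f a = x),
              ∑ b ∈ Finset.univ.filter (fun b => f b = z), μP a b :=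
          Finset.sum_congr rfl (fun z _ => hprod x z)
      _ = ∑ a ∈ Finset.univ.filter (fun a => f a = x),
            ∑ z ∈ Finset.univ.filter (fun z => z ≤ y),
              ∑ b ∈ Finset.univ.filter (fun b => f b = z), μP a b := Finset.sum_comm
      _ = ∑ a ∈ Finset.univ.filter (fun a => f a = x),
            ∑ b ∈ Finset.univ.filter (fun b => f b ≤ y), μP a b := by
          apply Finset.sum_congr rfl
          intro a _
          have hfw : ∑ z ∈ Finset.univ.filter (fun z => z ≤ y),
              ∑ b ∈ (Finset.univ.filter (fun b => f b ≤ y)).filter (fun b => f b = z),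
                μP a b
              = ∑ b ∈ Finset.univ.filter (fun b => f b ≤ y), μP a b := by
            apply Finset.sum_fiberwise_of_maps_to
            intro b hb
            simp only [Finset.mem_filter, Finset.mem_univ, true_and] at hb ⊢
            exact hb
          rw [← hfw]
          apply Finset.sum_congr rfl
          intro z hz
          simp only [Finset.mem_filter, Finset.mem_univ, true_and] at hz
          apply Finset.sum_congr _ (fun _ _ => rfl)
          ext b
          simp only [Finset.mem_filter, Finset.mem_univ, true_and]
          constructor
          · intro h
            exact ⟨h.le.trans hz, h⟩
          · rintro ⟨-, h2⟩
            exact h2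
      _ = ∑ a ∈ Finset.univ.filter (fun a => f a = x),
            ∑ w ∈ Finset.univ.filter (fun w => w ∈ C ∧ f w ≤ y), μC a w :=
          Finset.sum_congr rfl (fun a _ => key1 a y)
      _ = ∑ w ∈ Finset.univ.filter (fun w => w ∈ C ∧ f w ≤ y),
            ∑ a ∈ Finset.univ.filter (fun a => f a = x), μC a w := Finset.sum_comm
      _ = ∑ w ∈ Finset.univ.filter (fun w => w ∈ C ∧ f w ≤ y), μG (g x) w := by
          apply Finset.sum_congr rfl
          intro w hw
          simp only [Finset.mem_filter, Finset.mem_univ, true_and] at hw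
          exact key2 w hw.1 x
      _ = ∑ z ∈ Finset.univ.filter (fun z => z ≤ y), μQ x z := key3 x y
      _ = if x = y then 1 else 0 := key4 x y
  -- conclude by matrix algebra on Q
  set SM : Matrix Q Q ℤ := Matrix.of (fun x z =>
    ∑ p ∈ Finset.univ.filter (fun p : P × P => f p.1 = x ∧ f p.2 = z), μP p.1 p.2)
    with hSM
  set MQ : Matrix Q Q ℤ := Matrix.of μQ with hMQ
  set ZQ : Matrix Q Q ℤ := Matrix.of (fun z y => if z ≤ y then (1 : ℤ) else 0) with hZQ
  have hmulform : ∀ (A : Matrix Q Q ℤ) (x y : Q),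
      (A * ZQ) x y = ∑ z ∈ Finset.univ.filter (fun z => z ≤ y), A x z := by
    intro A x y
    rw [Matrix.mul_apply, Finset.sum_filter]
    apply Finset.sum_congr rfl
    intro z _
    rw [hZQ]
    simp only [Matrix.of_apply]
    by_cases h : z ≤ y
    · rw [if_pos h, if_pos h, mul_one]
    · rw [if_neg h, if_neg h, mul_zero]
  have h1 : SM * ZQ = 1 := by
    ext x y
    rw [hmulform SM x y, Matrix.one_apply]
    exact keyCI x y
  have h2 : MQ * ZQ = 1 := by
    ext x y
    rw [hmulform MQ x y, Matrix.one_apply]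
    exact key4 x y
  have h3 : ZQ * MQ = 1 := mul_eq_one_comm.mp h2
  have h4 : SM = MQ := by
    calc SM = SM * (ZQ * MQ) := by rw [h3, Matrix.mul_one]
      _ = (SM * ZQ) * MQ := by rw [Matrix.mul_assoc]
      _ = MQ := by rw [h1, Matrix.one_mul]
  intro x y
  exact (congrFun (congrFun h4 x) y).symm
end

section
/- The number of maximal tubings (n-tubings) of the complete graph on n nodes is n!, and the number of maximal tubings of the path graph on n nodes is the Catalan number C_n. -/
/-- A tubing of a simple graph `G`: a set of tubes (nonempty node sets inducing
connected subgraphs), pairwise compatible (nested or far apart, i.e. the union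
does not induce a connected subgraph), containing the universal tube. -/
structure Tubing {V : Type*} (G : SimpleGraph V) where
  tubes : Set (Set V)
  htube : ∀ s ∈ tubes, s.Nonempty ∧ (G.induce s).Connected
  hcompat : ∀ s ∈ tubes, ∀ t ∈ tubes,
    s ⊆ t ∨ t ⊆ s ∨ ¬ (G.induce (s ∪ t : Set V)).Connected
  huniv : Set.univ ∈ tubes

open SimpleGraph


lemma reach_inv {V : Type*} {G : SimpleGraph V} (p : V → Prop)
    (h : ∀ x y, G.Adj x y → (p x ↔ p y)) {a b : V} (hr : G.Reachable a b) :
    p a ↔ p b := by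
  obtain ⟨w⟩ := hr
  induction w with
  | nil => rfl
  | cons h' _ ih => exact (h _ _ h').trans ih

/-- an "order-connected" set in Fin n -/
def IsIv {n : ℕ} (s : Set (Fin n)) : Prop :=
  ∀ a ∈ s, ∀ b ∈ s, ∀ c : Fin n, a ≤ c → c ≤ b → c ∈ s

lemma iv_connected {n : ℕ} (s : Set (Fin n)) (hne : s.Nonempty) (hiv : IsIv s) :
    ((pathGraph n).induce s).Connected := by
  rw [SimpleGraph.connected_iff]
  refine ⟨?_, hne.to_subtype⟩
  have key : ∀ k : ℕ, ∀ x y : s, (x:Fin n) ≤ y → (y:Fin n).val - (x:Fin n).val = k →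
      ((pathGraph n).induce s).Reachable x y := by
    intro k
    induction k with
    | zero =>
      intro x y hle hd
      have hv : (x:Fin n).val = (y:Fin n).val := by
        have := Fin.le_iff_val_le_val.mp hle; omega
      have : x = y := Subtype.ext (Fin.ext hv)
      rw [this]
    | succ k ih =>
      intro x y hle hd
      have hxy : (x:Fin n).val < (y:Fin n).val := by
        have := Fin.le_iff_val_le_val.mp hle; omega
      have hlt : (x:Fin n).val + 1 < n := by
        have := (y:Fin n).isLt; omega
      set x' : Fin n := ⟨(x:Fin n).val + 1, hlt⟩ with hx'
      have hx's : x' ∈ s := hiv _ x.2 _ y.2 x' (by simp [hx', Fin.le_iff_val_le_val]) (by simp [hx', Fin.le_iff_val_le_val]; omega)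
      have hadj : ((pathGraph n).induce s).Adj x ⟨x', hx's⟩ := by
        simp only [SimpleGraph.comap_adj]
        exact pathGraph_adj.mpr (Or.inl rfl)
      refine hadj.reachable.trans (ih ⟨x', hx's⟩ y ?_ ?_)
      · simp [hx', Fin.le_iff_val_le_val]; omega
      · simp [hx']; omega
  intro x y
  rcases le_total (x:Fin n) (y:Fin n) with h | h
  · exact key _ x y h rfl
  · exact (key _ y x h rfl).symm

lemma connected_iv {n : ℕ} (s : Set (Fin n))
    (hc : ((pathGraph n).induce s).Connected) : IsIv s := by
  intro a ha b hb c hac hcb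
  by_contra hcs
  have hr : ((pathGraph n).induce s).Reachable ⟨a, ha⟩ ⟨b, hb⟩ := hc.preconnected _ _
  have hinv := reach_inv (G := (pathGraph n).induce s)
    (fun x => (x : Fin n).val < c.val) ?_ hr
  · have hac' : a.val < c.val := by
      have : a ≠ c := fun h => hcs (h ▸ ha)
      have := Fin.le_iff_val_le_val.mp hac
      have : a.val ≠ c.val := fun h => ‹a ≠ c› (Fin.ext h)
      omega
    have hcb' : ¬ (b.val < c.val) := by
      have := Fin.le_iff_val_le_val.mp hcb; omega
    exact hcb' (hinv.mp hac')
  · rintro ⟨x, hx⟩ ⟨y, hy⟩ hadj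
    simp only [SimpleGraph.comap_adj] at hadj
    have h1 : x.val + 1 = y.val ∨ y.val + 1 = x.val := pathGraph_adj.mp hadj
    have hxc : x.val ≠ c.val := fun h => hcs ((Fin.ext h : x = c) ▸ hx)
    have hyc : y.val ≠ c.val := fun h => hcs ((Fin.ext h : y = c) ▸ hy)
    show x.val < c.val ↔ y.val < c.val
    omega

def IvS {n : ℕ} (a b : ℕ) : Set (Fin n) := {v | a ≤ v.val ∧ v.val ≤ b}

lemma mem_IvS {n a b : ℕ} {v : Fin n} : v ∈ (IvS a b : Set (Fin n)) ↔ a ≤ v.val ∧ v.val ≤ b :=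
  Iff.rfl

lemma IvS_valid_nonempty {n a b : ℕ} (hab : a ≤ b) (hbn : b < n) :
    (IvS a b : Set (Fin n)).Nonempty :=
  ⟨⟨a, lt_of_le_of_lt hab hbn⟩, by simp [mem_IvS, hab]⟩

lemma IvS_isIv {n a b : ℕ} : IsIv (IvS a b : Set (Fin n)) := by
  rintro x ⟨h1, h2⟩ y ⟨h3, h4⟩ c hc1 hc2
  have := Fin.le_iff_val_le_val.mp hc1
  have := Fin.le_iff_val_le_val.mp hc2
  exact ⟨by omega, by omega⟩

lemma tube_iff {n : ℕ} (s : Set (Fin n)) :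
    (s.Nonempty ∧ ((pathGraph n).induce s).Connected) ↔
      ∃ p : ℕ × ℕ, p.1 ≤ p.2 ∧ p.2 < n ∧ s = IvS p.1 p.2 := by
  constructor
  · rintro ⟨hne, hc⟩
    have hiv := connected_iv s hc
    set A : Set ℕ := Fin.val '' s with hA
    have hAne : A.Nonempty := hne.image _
    have hAbdd : BddAbove A := ⟨n, by rintro x ⟨v, _, rfl⟩; exact le_of_lt v.isLt⟩
    refine ⟨(sInf A, sSup A), ?_, ?_, ?_⟩
    · exact le_csSup hAbdd (Nat.sInf_mem hAne)
    · obtain ⟨v, hv, he⟩ := Nat.sSup_mem hAne hAbdd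
      simpa [← he] using v.isLt
    · apply Set.Subset.antisymm
      · intro v hv
        exact ⟨Nat.sInf_le ⟨v, hv, rfl⟩, le_csSup hAbdd ⟨v, hv, rfl⟩⟩
      · rintro v ⟨h1, h2⟩
        obtain ⟨va, hva, hea⟩ := Nat.sInf_mem hAne
        obtain ⟨vb, hvb, heb⟩ := Nat.sSup_mem hAne hAbdd
        exact hiv va hva vb hvb v (Fin.le_iff_val_le_val.mpr (by omega))
          (Fin.le_iff_val_le_val.mpr (by omega))
  · rintro ⟨⟨a, b⟩, h1, h2, rfl⟩
    exact ⟨IvS_valid_nonempty h1 h2, iv_connected _ (IvS_valid_nonempty h1 h2) IvS_isIv⟩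

lemma IvS_inj {n : ℕ} {a b c d : ℕ} (h1 : a ≤ b) (h2 : b < n) (h3 : c ≤ d) (h4 : d < n)
    (h : (IvS a b : Set (Fin n)) = IvS c d) : a = c ∧ b = d := by
  have ha : (⟨a, by omega⟩ : Fin n) ∈ (IvS c d : Set (Fin n)) := h ▸ ⟨le_refl _, h1⟩
  have hb : (⟨b, h2⟩ : Fin n) ∈ (IvS c d : Set (Fin n)) := h ▸ ⟨h1, le_refl _⟩
  have hc : (⟨c, by omega⟩ : Fin n) ∈ (IvS a b : Set (Fin n)) := h ▸ ⟨le_refl _, h3⟩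
  have hd : (⟨d, h4⟩ : Fin n) ∈ (IvS a b : Set (Fin n)) := h ▸ ⟨h3, le_refl _⟩
  obtain ⟨u1, u2⟩ := ha; obtain ⟨u3, u4⟩ := hb; obtain ⟨u5, u6⟩ := hc; obtain ⟨u7, u8⟩ := hd
  simp only [Fin.val_mk] at u1 u2 u3 u4 u5 u6 u7 u8
  omega

lemma IvS_subset_iff {n : ℕ} {a b c d : ℕ} (h1 : a ≤ b) (h2 : b < n) :
    (IvS a b : Set (Fin n)) ⊆ IvS c d ↔ (c ≤ a ∧ b ≤ d) := by
  constructor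
  · intro h
    have ha := h (show (⟨a, by omega⟩ : Fin n) ∈ IvS a b from ⟨le_refl _, h1⟩)
    have hb := h (show (⟨b, h2⟩ : Fin n) ∈ IvS a b from ⟨h1, le_refl _⟩)
    obtain ⟨u1, u2⟩ := ha; obtain ⟨u3, u4⟩ := hb
    simp only [Fin.val_mk] at u1 u2 u3 u4
    exact ⟨by omega, by omega⟩
  · rintro ⟨hca, hbd⟩ v ⟨hv1, hv2⟩
    exact ⟨by omega, by omega⟩

lemma IvS_union_conn_iff {n : ℕ} {a b c d : ℕ} (h1 : a ≤ b) (h2 : b < n) (h3 : c ≤ d)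
    (h4 : d < n) :
    ((pathGraph n).induce ((IvS a b : Set (Fin n)) ∪ IvS c d)).Connected ↔
      ¬ (b + 1 < c ∨ d + 1 < a) := by
  constructor
  · intro hc hsep
    have hiv := connected_iv _ hc
    rcases hsep with hs | hs
    · have hx : (⟨b, h2⟩ : Fin n) ∈ (IvS a b : Set (Fin n)) ∪ IvS c d :=
        Or.inl ⟨h1, le_refl _⟩
      have hy : (⟨c, by omega⟩ : Fin n) ∈ (IvS a b : Set (Fin n)) ∪ IvS c d :=
        Or.inr ⟨le_refl _, h3⟩
      have hz := hiv _ hx _ hy (⟨b + 1, by omega⟩ : Fin n)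
        (Fin.le_iff_val_le_val.mpr (by simp only [Fin.val_mk]; omega))
        (Fin.le_iff_val_le_val.mpr (by simp only [Fin.val_mk]; omega))
      rcases hz with ⟨hz1, hz2⟩ | ⟨hz1, hz2⟩ <;> simp only [Fin.val_mk] at hz1 hz2 <;> omega
    · have hx : (⟨d, h4⟩ : Fin n) ∈ (IvS a b : Set (Fin n)) ∪ IvS c d :=
        Or.inr ⟨h3, le_refl _⟩
      have hy : (⟨a, by omega⟩ : Fin n) ∈ (IvS a b : Set (Fin n)) ∪ IvS c d :=
        Or.inl ⟨le_refl _, h1⟩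
      have hz := hiv _ hx _ hy (⟨d + 1, by omega⟩ : Fin n)
        (Fin.le_iff_val_le_val.mpr (by simp only [Fin.val_mk]; omega))
        (Fin.le_iff_val_le_val.mpr (by simp only [Fin.val_mk]; omega))
      rcases hz with ⟨hz1, hz2⟩ | ⟨hz1, hz2⟩ <;> simp only [Fin.val_mk] at hz1 hz2 <;> omega
  · intro hsep
    apply iv_connected
    · exact (IvS_valid_nonempty h1 h2).mono Set.subset_union_left
    · rintro x hx y hy z hz1 hz2
      have hz1 := Fin.le_iff_val_le_val.mp hz1
      have hz2 := Fin.le_iff_val_le_val.mp hz2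
      rcases hx with ⟨hx1, hx2⟩ | ⟨hx1, hx2⟩ <;> rcases hy with ⟨hy1, hy2⟩ | ⟨hy1, hy2⟩ <;>
        [skip; skip; skip; skip] <;>
      · by_cases hzb : z.val ≤ b
        · by_cases hza : a ≤ z.val
          · exact Or.inl ⟨hza, hzb⟩
          · exact Or.inr ⟨by omega, by omega⟩
        · exact Or.inr ⟨by omega, by omega⟩



def nested (p q : ℕ × ℕ) : Prop := (q.1 ≤ p.1 ∧ p.2 ≤ q.2) ∨ (p.1 ≤ q.1 ∧ q.2 ≤ p.2)
def sep (p q : ℕ × ℕ) : Prop := p.2 + 1 < q.1 ∨ q.2 + 1 < p.1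

instance : ∀ p q : ℕ × ℕ, Decidable (nested p q) := fun _ _ => by unfold nested; infer_instance
instance : ∀ p q : ℕ × ℕ, Decidable (sep p q) := fun _ _ => by unfold sep; infer_instance

def IsFam (l r : ℕ) (F : Finset (ℕ × ℕ)) : Prop :=
  (∀ p ∈ F, l ≤ p.1 ∧ p.1 ≤ p.2 ∧ p.2 < r) ∧
  ∀ p ∈ F, ∀ q ∈ F, nested p q ∨ sep p q

instance : ∀ l r F, Decidable (IsFam l r F) := fun _ _ _ => by unfold IsFam; infer_instance

def Fams (l r : ℕ) : Finset (Finset (ℕ × ℕ)) :=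
  ((Finset.range r ×ˢ Finset.range r).powerset).filter (fun F => IsFam l r F ∧ F.card = r - l)

lemma mem_Fams {l r : ℕ} {F : Finset (ℕ × ℕ)} :
    F ∈ Fams l r ↔ IsFam l r F ∧ F.card = r - l := by
  unfold Fams
  simp only [Finset.mem_filter, Finset.mem_powerset, and_iff_right_iff_imp]
  rintro ⟨⟨h1, -⟩, -⟩
  intro p hp
  obtain ⟨a1, a2, a3⟩ := h1 p hp
  simp only [Finset.mem_product, Finset.mem_range]
  exact ⟨by omega, by omega⟩

lemma exists_uncovered {l r : ℕ} {F : Finset (ℕ × ℕ)} (h : IsFam l r F) (hlr : l < r) :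
    ∃ x, l ≤ x ∧ x < r ∧ ∀ q ∈ F, q ≠ (l, r - 1) → ¬(q.1 ≤ x ∧ x ≤ q.2) := by
  classical
  set S : Finset (ℕ × ℕ) := F.filter (fun q => q ≠ (l, r - 1) ∧ q.1 ≤ l ∧ l ≤ q.2) with hS
  by_cases hSne : S.Nonempty
  · obtain ⟨q0, hq0S, hq0max⟩ := S.exists_max_image (fun q => q.2) hSne
    simp only [hS, Finset.mem_filter] at hq0S
    obtain ⟨hq0F, hq0ne, hq0l, hq0l2⟩ := hq0S
    obtain ⟨hb1, hb2, hb3⟩ := h.1 q0 hq0F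
    have hq0top : q0.2 < r - 1 := by
      rcases Nat.lt_or_ge q0.2 (r-1) with h' | h'
      · exact h'
      · exfalso; apply hq0ne
        have : q0.1 = l := by omega
        have : q0.2 = r - 1 := by omega
        exact Prod.ext ‹q0.1 = l› ‹q0.2 = r - 1›
    refine ⟨q0.2 + 1, by omega, by omega, ?_⟩
    rintro q hqF hqne ⟨hc1, hc2⟩
    obtain ⟨hd1, hd2, hd3⟩ := h.1 q hqF
    rcases h.2 q hqF q0 hq0F with hn | hs
    · rcases hn with ⟨he1, he2⟩ | ⟨he1, he2⟩
      · -- q ⊆ q0 : contradiction with q.2 ≥ q0.2+1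
        omega
      · -- q0 ⊆ q : q ∈ S with bigger right end
        have hqS : q ∈ S := by
          simp only [hS, Finset.mem_filter]
          exact ⟨hqF, hqne, by omega, by omega⟩
        have := hq0max q hqS
        omega
    · unfold sep at hs; omega
  · refine ⟨l, le_refl l, hlr, ?_⟩
    rintro q hqF hqne ⟨hc1, hc2⟩
    apply hSne
    exact ⟨q, by simp only [hS, Finset.mem_filter]; exact ⟨hqF, hqne, hc1, hc2⟩⟩

lemma fam_card_le {l r : ℕ} {F : Finset (ℕ × ℕ)} (h : IsFam l r F) : F.card ≤ r - l := by
  classical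
  have H : ∀ p ∈ F, ∃ x, p.1 ≤ x ∧ x ≤ p.2 ∧
      ∀ q ∈ F, q ≠ p → (p.1 ≤ q.1 ∧ q.2 ≤ p.2) → ¬(q.1 ≤ x ∧ x ≤ q.2) := by
    intro p hp
    obtain ⟨hb1, hb2, hb3⟩ := h.1 p hp
    have hsub : IsFam p.1 (p.2 + 1) (F.filter (fun q => p.1 ≤ q.1 ∧ q.2 ≤ p.2)) := by
      constructor
      · intro q hq
        simp only [Finset.mem_filter] at hq
        obtain ⟨hqF, hq1, hq2⟩ := hq
        obtain ⟨_, _, _⟩ := h.1 q hqF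
        exact ⟨by omega, by omega, by omega⟩
      · intro q hq q' hq'
        simp only [Finset.mem_filter] at hq hq'
        exact h.2 q hq.1 q' hq'.1
    obtain ⟨x, hx1, hx2, hx3⟩ := exists_uncovered hsub (by omega)
    refine ⟨x, hx1, by omega, fun q hqF hqne hqsub hcontain => hx3 q ?_ ?_ hcontain⟩
    · simp only [Finset.mem_filter]; exact ⟨hqF, hqsub⟩
    · have he : (p.1, p.2 + 1 - 1) = p := by
        rw [Nat.add_sub_cancel]
      rw [he]; exact hqne
  choose f hf1 hf2 hf3 using H
  have hcard : F.card = F.attach.card := (Finset.card_attach (s := F)).symm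
  rw [hcard]
  have := Finset.card_le_card_of_injOn (f := fun p : {q // q ∈ F} => f p.1 p.2)
    (s := F.attach) (t := Finset.Ico l r) ?_ ?_
  · simpa [Nat.card_Ico] using this
  · intro a _
    obtain ⟨hb1, hb2, hb3⟩ := h.1 a.1 a.2
    have h1 := hf1 a.1 a.2
    have h2 := hf2 a.1 a.2
    simp only [Finset.mem_coe, Finset.mem_Ico]
    omega
  · intro a _ b _ hab
    simp only at hab
    by_contra hne
    have hne' : a.1 ≠ b.1 := fun he => hne (Subtype.ext he)
    have hxa1 := hf1 a.1 a.2
    have hxa2 := hf2 a.1 a.2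
    have hxb1 := hf1 b.1 b.2
    have hxb2 := hf2 b.1 b.2
    rcases h.2 a.1 a.2 b.1 b.2 with hn | hs
    · rcases hn with ⟨he1, he2⟩ | ⟨he1, he2⟩
      · -- a ⊆ b : a is a proper child of b containing f b
        exact hf3 b.1 b.2 a.1 a.2 hne' ⟨he1, he2⟩
          ⟨by omega, by omega⟩
      · exact hf3 a.1 a.2 b.1 b.2 (fun he => hne' he.symm) ⟨he1, he2⟩ ⟨by omega, by omega⟩
    · unfold sep at hs; omega

lemma filter_left_fam {l r x : ℕ} {F : Finset (ℕ × ℕ)} (h : IsFam l r F) :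
    IsFam l x (F.filter (fun p => p.2 < x)) := by
  constructor
  · intro p hp
    simp only [Finset.mem_filter] at hp
    obtain ⟨_, _, _⟩ := h.1 p hp.1
    exact ⟨by omega, by omega, hp.2⟩
  · intro p hp q hq
    simp only [Finset.mem_filter] at hp hq
    exact h.2 p hp.1 q hq.1

lemma filter_right_fam {l r x : ℕ} {F : Finset (ℕ × ℕ)} (h : IsFam l r F) :
    IsFam (x + 1) r (F.filter (fun p => x < p.1)) := by
  constructor
  · intro p hp
    simp only [Finset.mem_filter] at hp
    obtain ⟨_, _, _⟩ := h.1 p hp.1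
    exact ⟨by omega, by omega, by omega⟩
  · intro p hp q hq
    simp only [Finset.mem_filter] at hp hq
    exact h.2 p hp.1 q hq.1

lemma top_mem_split {m : ℕ} {F : Finset (ℕ × ℕ)} (hF : F ∈ Fams 0 (m + 1)) :
    ∃ x ≤ m, (0, m) ∈ F ∧
      F.filter (fun p => p.2 < x) ∈ Fams 0 x ∧
      F.filter (fun p => x < p.1) ∈ Fams (x + 1) (m + 1) ∧
      F = insert (0, m) ((F.filter (fun p => p.2 < x)) ∪ (F.filter (fun p => x < p.1))) := by
  classical
  obtain ⟨hIs, hcard⟩ := mem_Fams.mp hF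
  obtain ⟨x, hx0, hxr, hxav⟩ := exists_uncovered hIs (by omega)
  have hxm : x ≤ m := by omega
  set L := F.filter (fun p => p.2 < x) with hL
  set R := F.filter (fun p => x < p.1) with hR
  have hLfam : IsFam 0 x L := filter_left_fam hIs
  have hRfam : IsFam (x + 1) (m + 1) R := filter_right_fam hIs
  have hLcard := fam_card_le hLfam
  have hRcard := fam_card_le hRfam
  have havoid : ∀ q ∈ F, q ≠ (0, m) → q ∈ L ∨ q ∈ R := by
    intro q hq hqne
    have := hxav q hq (by simpa using hqne)
    obtain ⟨_, hq2, _⟩ := hIs.1 q hq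
    simp only [hL, hR, Finset.mem_filter]
    rcases Nat.lt_or_ge q.2 x with h' | h'
    · exact Or.inl ⟨hq, h'⟩
    · exact Or.inr ⟨hq, by omega⟩
  have hLR : Disjoint L R := by
    rw [Finset.disjoint_left]
    intro p hp hp'
    simp only [hL, hR, Finset.mem_filter] at hp hp'
    obtain ⟨_, hq2, _⟩ := hIs.1 p hp.1
    omega
  have htopL : (0, m) ∉ L := by simp [hL, Finset.mem_filter]; omega
  have htopR : (0, m) ∉ R := by simp [hR, Finset.mem_filter]
  have htop : (0, m) ∈ F := by
    by_contra htop
    have hsub : F ⊆ L ∪ R := by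
      intro q hq
      rcases havoid q hq (fun he => htop (he ▸ hq)) with h' | h'
      · exact Finset.mem_union_left _ h'
      · exact Finset.mem_union_right _ h'
    have := Finset.card_le_card hsub
    rw [Finset.card_union_of_disjoint hLR] at this
    omega
  have heq : F = insert (0, m) (L ∪ R) := by
    apply Finset.Subset.antisymm
    · intro q hq
      by_cases hqe : q = (0, m)
      · simp [hqe]
      · rcases havoid q hq hqe with h' | h'
        · simp [Finset.mem_insert, Finset.mem_union, h']
        · simp [Finset.mem_insert, Finset.mem_union, h']
    · intro q hq
      simp only [Finset.mem_insert, Finset.mem_union] at hq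
      rcases hq with rfl | h' | h'
      · exact htop
      · exact (Finset.mem_filter.mp h').1
      · exact (Finset.mem_filter.mp h').1
  have hcards : L.card + R.card = m := by
    have : F.card = (L ∪ R).card + 1 := by
      rw [heq, Finset.card_insert_of_notMem (by
        simp only [Finset.mem_union]; exact fun h' => h'.elim htopL htopR)]
    rw [Finset.card_union_of_disjoint hLR] at this
    omega
  refine ⟨x, hxm, htop, mem_Fams.mpr ⟨hLfam, by rw [← hL]; omega⟩, mem_Fams.mpr ⟨hRfam, by rw [← hR]; omega⟩, heq⟩

def glue (m x : ℕ) : Finset (ℕ × ℕ) × Finset (ℕ × ℕ) → Finset (ℕ × ℕ) :=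
  fun P => insert (0, m) (P.1 ∪ P.2)

lemma glue_mem {m x : ℕ} {L R : Finset (ℕ × ℕ)} (hx : x ≤ m)
    (hL : L ∈ Fams 0 x) (hR : R ∈ Fams (x + 1) (m + 1)) :
    glue m x (L, R) ∈ Fams 0 (m + 1) := by
  classical
  obtain ⟨hLfam, hLcard⟩ := mem_Fams.mp hL
  obtain ⟨hRfam, hRcard⟩ := mem_Fams.mp hR
  have hmemL : ∀ p ∈ L, p.1 ≤ p.2 ∧ p.2 < x := fun p hp => by
    obtain ⟨_, _, _⟩ := hLfam.1 p hp; omega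
  have hmemR : ∀ p ∈ R, x + 1 ≤ p.1 ∧ p.1 ≤ p.2 ∧ p.2 < m + 1 := fun p hp => by
    obtain ⟨_, _, _⟩ := hRfam.1 p hp; omega
  have htopL : (0, m) ∉ L := fun h => by have := hmemL _ h; simp at this; omega
  have htopR : (0, m) ∉ R := fun h => by have := hmemR _ h; simp at this
  have hLR : Disjoint L R := by
    rw [Finset.disjoint_left]
    intro p hp hp'
    have := hmemL p hp; have := hmemR p hp'
    omega
  apply mem_Fams.mpr
  constructor
  · constructor
    · intro p hp
      simp only [glue, Finset.mem_insert, Finset.mem_union] at hp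
      rcases hp with rfl | hp | hp
      · simp
      · have := hmemL p hp; omega
      · have := hmemR p hp; omega
    · intro p hp q hq
      simp only [glue, Finset.mem_insert, Finset.mem_union] at hp hq
      have hcase : ∀ a b : ℕ × ℕ, (a ∈ L ∧ b ∈ R) → nested a b ∨ sep a b := by
        rintro a b ⟨ha, hb⟩
        have := hmemL a ha; have := hmemR b hb
        right; left; omega
      rcases hp with rfl | hp | hp <;> rcases hq with rfl | hq | hq
      · left; left; exact ⟨le_refl _, le_refl _⟩
      · have := hmemL q hq; left; right; exact ⟨by omega, by omega⟩
      · have := hmemR q hq; left; right; exact ⟨by omega, by omega⟩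
      · have := hmemL p hp; left; left; exact ⟨by omega, by omega⟩
      · exact hLfam.2 p hp q hq
      · exact hcase p q ⟨hp, hq⟩
      · have := hmemR p hp; left; left; exact ⟨by omega, by omega⟩
      · rcases hcase q p ⟨hq, hp⟩ with hn | hs
        · left; unfold nested at *; tauto
        · right; unfold sep at *; tauto
      · exact hRfam.2 p hp q hq
  · have h1 : (0, m) ∉ L ∪ R := by
      simp only [Finset.mem_union]; exact fun h => h.elim htopL htopR
    simp only [glue]
    rw [Finset.card_insert_of_notMem h1, Finset.card_union_of_disjoint hLR]
    omega

lemma two_uncovered_absurd {m x x' : ℕ} (hxx : x < x') (hx'm : x' ≤ m)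
    {F : Finset (ℕ × ℕ)} (hF : F ∈ Fams 0 (m + 1))
    (hav : ∀ q ∈ F, q ≠ (0, m) → (q.2 < x ∨ x < q.1) ∧ (q.2 < x' ∨ x' < q.1)) : False := by
  classical
  obtain ⟨hIs, hcard⟩ := mem_Fams.mp hF
  set A := F.filter (fun p => p.2 < x) with hA
  set B := F.filter (fun p => x < p.1 ∧ p.2 < x') with hB
  set C := F.filter (fun p => x' < p.1) with hC
  have hAcard : A.card ≤ x := by
    have := fam_card_le (filter_left_fam (x := x) hIs); simpa using this
  have hCcard : C.card ≤ m - x' := by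
    have := fam_card_le (filter_right_fam (x := x') hIs); simpa using this
  have hBcard : B.card ≤ x' - (x + 1) := by
    have hBfam : IsFam (x + 1) x' B := by
      constructor
      · intro p hp
        simp only [hB, Finset.mem_filter] at hp
        obtain ⟨_, _, _⟩ := hIs.1 p hp.1
        omega
      · intro p hp q hq
        simp only [hB, Finset.mem_filter] at hp hq
        exact hIs.2 p hp.1 q hq.1
    have := fam_card_le hBfam; omega
  have hsub : F ⊆ insert (0, m) (A ∪ B ∪ C) := by
    intro q hq
    simp only [Finset.mem_insert, Finset.mem_union, hA, hB, hC, Finset.mem_filter]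
    by_cases hqe : q = (0, m)
    · exact Or.inl hqe
    · obtain ⟨h1, h2⟩ := hav q hq hqe
      obtain ⟨_, _, _⟩ := hIs.1 q hq
      right
      rcases Nat.lt_or_ge q.2 x with h' | h'
      · exact Or.inl (Or.inl ⟨hq, h'⟩)
      · rcases Nat.lt_or_ge q.2 x' with h'' | h''
        · exact Or.inl (Or.inr ⟨hq, by omega, h''⟩)
        · exact Or.inr ⟨hq, by omega⟩
  have hle := Finset.card_le_card hsub
  have h1 : (insert (0, m) (A ∪ B ∪ C)).card ≤ (A ∪ B ∪ C).card + 1 :=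
    Finset.card_insert_le _ _
  have h2 : (A ∪ B ∪ C).card ≤ A.card + B.card + C.card :=
    le_trans (Finset.card_union_le _ _) (by
      have := Finset.card_union_le A B; omega)
  omega

lemma decomp (m : ℕ) : Fams 0 (m + 1) =
    (Finset.range (m + 1)).biUnion
      (fun x => ((Fams 0 x) ×ˢ (Fams (x + 1) (m + 1))).image (glue m x)) := by
  classical
  apply Finset.Subset.antisymm
  · intro F hF
    obtain ⟨x, hxm, htop, hLmem, hRmem, heq⟩ := top_mem_split hF
    simp only [Finset.mem_biUnion, Finset.mem_range, Finset.mem_image, Finset.mem_product]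
    exact ⟨x, by omega, (F.filter (fun p => p.2 < x), F.filter (fun p => x < p.1)),
      ⟨hLmem, hRmem⟩, heq.symm⟩
  · intro F hF
    simp only [Finset.mem_biUnion, Finset.mem_range, Finset.mem_image, Finset.mem_product] at hF
    obtain ⟨x, hx, ⟨L, R⟩, ⟨hL, hR⟩, rfl⟩ := hF
    exact glue_mem (by omega) hL hR

lemma glue_avoid {m x : ℕ} {L R : Finset (ℕ × ℕ)}
    (hL : L ∈ Fams 0 x) (hR : R ∈ Fams (x + 1) (m + 1)) :
    ∀ q ∈ glue m x (L, R), q ≠ (0, m) → q.2 < x ∨ x < q.1 := by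
  intro q hq hqne
  simp only [glue, Finset.mem_insert, Finset.mem_union] at hq
  rcases hq with rfl | hq | hq
  · exact absurd rfl hqne
  · obtain ⟨_, _, h3⟩ := (mem_Fams.mp hL).1.1 q hq
    omega
  · obtain ⟨h1, _, _⟩ := (mem_Fams.mp hR).1.1 q hq
    omega

lemma glue_filter_left {m x : ℕ} {L R : Finset (ℕ × ℕ)}
    (hL : L ∈ Fams 0 x) (hR : R ∈ Fams (x + 1) (m + 1)) (hx : x ≤ m) :
    (glue m x (L, R)).filter (fun p => p.2 < x) = L := by
  ext q
  simp only [Finset.mem_filter, glue, Finset.mem_insert, Finset.mem_union]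
  constructor
  · rintro ⟨rfl | hq | hq, hc⟩
    · simp at hc; omega
    · exact hq
    · obtain ⟨h1, h2, _⟩ := (mem_Fams.mp hR).1.1 q hq; omega
  · intro hq
    obtain ⟨_, _, h3⟩ := (mem_Fams.mp hL).1.1 q hq
    exact ⟨Or.inr (Or.inl hq), h3⟩

lemma glue_filter_right {m x : ℕ} {L R : Finset (ℕ × ℕ)}
    (hL : L ∈ Fams 0 x) (hR : R ∈ Fams (x + 1) (m + 1)) (hx : x ≤ m) :
    (glue m x (L, R)).filter (fun p => x < p.1) = R := by
  ext q
  simp only [Finset.mem_filter, glue, Finset.mem_insert, Finset.mem_union]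
  constructor
  · rintro ⟨rfl | hq | hq, hc⟩
    · exact absurd (show x < 0 from hc) (by omega)
    · obtain ⟨_, _, h3⟩ := (mem_Fams.mp hL).1.1 q hq; omega
    · exact hq
  · intro hq
    obtain ⟨h1, _, _⟩ := (mem_Fams.mp hR).1.1 q hq
    exact ⟨Or.inr (Or.inr hq), by omega⟩

lemma card_Fams_succ (m : ℕ) :
    (Fams 0 (m + 1)).card =
      ∑ x ∈ Finset.range (m + 1), (Fams 0 x).card * (Fams (x + 1) (m + 1)).card := by
  classical
  rw [decomp, Finset.card_biUnion]
  · apply Finset.sum_congr rfl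
    intro x hx
    rw [Finset.card_image_of_injOn, Finset.card_product]
    rintro ⟨L, R⟩ hLR ⟨L', R'⟩ hLR' heq
    simp only [Finset.mem_coe, Finset.mem_product] at hLR hLR'
    simp only [Finset.mem_range] at hx
    have h1 := glue_filter_left hLR.1 hLR.2 (by omega)
    have h2 := glue_filter_right hLR.1 hLR.2 (by omega)
    have h1' := glue_filter_left hLR'.1 hLR'.2 (by omega)
    have h2' := glue_filter_right hLR'.1 hLR'.2 (by omega)
    rw [heq] at h1 h2
    rw [h1'] at h1
    rw [h2'] at h2
    rw [Prod.ext_iff]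
    exact ⟨h1.symm, h2.symm⟩
  · intro x hx y hy hxy
    simp only [Finset.mem_coe, Finset.mem_range] at hx hy
    apply Finset.disjoint_left.mpr
    intro F hFx hFy
    simp only [Finset.mem_image, Finset.mem_product] at hFx hFy
    obtain ⟨⟨L, R⟩, ⟨hL, hR⟩, rfl⟩ := hFx
    obtain ⟨⟨L', R'⟩, ⟨hL', hR'⟩, heq⟩ := hFy
    have havx := glue_avoid (m := m) hL hR
    have havy : ∀ q ∈ glue m x (L, R), q ≠ (0, m) → q.2 < y ∨ y < q.1 := by
      rw [← heq]; exact glue_avoid hL' hR'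
    have hmem : glue m x (L, R) ∈ Fams 0 (m + 1) := glue_mem (by omega) hL hR
    rcases Nat.lt_or_ge x y with h' | h'
    · exact two_uncovered_absurd h' (by omega) hmem
        (fun q hq hqne => ⟨havx q hq hqne, havy q hq hqne⟩)
    · have h'' : y < x := by omega
      exact two_uncovered_absurd h'' (by omega) hmem
        (fun q hq hqne => ⟨havy q hq hqne, havx q hq hqne⟩)

lemma card_Fams_shift (l r k : ℕ) : (Fams (l + k) (r + k)).card = (Fams l r).card := by
  classical
  refine Finset.card_nbij' (i := fun F => F.image (fun p : ℕ × ℕ => (p.1 - k, p.2 - k)))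
    (j := fun F => F.image (fun p : ℕ × ℕ => (p.1 + k, p.2 + k))) ?_ ?_ ?_ ?_
  · -- hi : maps into Fams l r
    intro F hF
    obtain ⟨hIs, hcard⟩ := mem_Fams.mp hF
    have hinj : Set.InjOn (fun p : ℕ × ℕ => (p.1 - k, p.2 - k)) F := by
      rintro p hp q hq he
      obtain ⟨h1, h2, h3⟩ := hIs.1 p hp
      obtain ⟨h4, h5, h6⟩ := hIs.1 q hq
      simp only [Prod.ext_iff] at he ⊢
      constructor <;> omega
    apply mem_Fams.mpr
    refine ⟨⟨?_, ?_⟩, ?_⟩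
    · intro p hp
      simp only [Finset.mem_image] at hp
      obtain ⟨q, hq, rfl⟩ := hp
      obtain ⟨h1, h2, h3⟩ := hIs.1 q hq
      exact ⟨by omega, by omega, by omega⟩
    · intro p hp q hq
      simp only [Finset.mem_image] at hp hq
      obtain ⟨p', hp', rfl⟩ := hp
      obtain ⟨q', hq', rfl⟩ := hq
      obtain ⟨h1, h2, h3⟩ := hIs.1 p' hp'
      obtain ⟨h4, h5, h6⟩ := hIs.1 q' hq'
      rcases hIs.2 p' hp' q' hq' with hn | hs
      · left; unfold nested at *; simp only; omega
      · right; unfold sep at *; simp only; omega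
    · rw [Finset.card_image_of_injOn hinj, hcard]; omega
  · -- hj
    intro F hF
    obtain ⟨hIs, hcard⟩ := mem_Fams.mp hF
    have hinj : Set.InjOn (fun p : ℕ × ℕ => (p.1 + k, p.2 + k)) F := by
      rintro p hp q hq he
      simp only [Prod.ext_iff] at he ⊢
      constructor <;> omega
    apply mem_Fams.mpr
    refine ⟨⟨?_, ?_⟩, ?_⟩
    · intro p hp
      simp only [Finset.mem_image] at hp
      obtain ⟨q, hq, rfl⟩ := hp
      obtain ⟨h1, h2, h3⟩ := hIs.1 q hq
      exact ⟨by omega, by omega, by omega⟩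
    · intro p hp q hq
      simp only [Finset.mem_image] at hp hq
      obtain ⟨p', hp', rfl⟩ := hp
      obtain ⟨q', hq', rfl⟩ := hq
      rcases hIs.2 p' hp' q' hq' with hn | hs
      · left; unfold nested at *; simp only; omega
      · right; unfold sep at *; simp only; omega
    · rw [Finset.card_image_of_injOn hinj, hcard]; omega
  · -- left inverse
    intro F hF
    obtain ⟨hIs, hcard⟩ := mem_Fams.mp hF
    dsimp only
    rw [Finset.image_image]
    ext q
    simp only [Finset.mem_image, Function.comp_apply]
    constructor
    · rintro ⟨p, hp, rfl⟩
      obtain ⟨h1, h2, h3⟩ := hIs.1 p hp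
      have : (p.1 - k + k, p.2 - k + k) = p := by
        simp only [Prod.ext_iff]; constructor <;> omega
      rw [this]; exact hp
    · intro hq
      obtain ⟨h1, h2, h3⟩ := hIs.1 q hq
      exact ⟨q, hq, by simp only [Prod.ext_iff]; constructor <;> omega⟩
  · -- right inverse
    intro F hF
    dsimp only
    rw [Finset.image_image]
    ext q
    simp only [Finset.mem_image, Function.comp_apply]
    constructor
    · rintro ⟨p, hp, rfl⟩
      have : (p.1 + k - k, p.2 + k - k) = p := by
        simp only [Prod.ext_iff]; constructor <;> omega
      rw [this]; exact hp
    · intro hq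
      exact ⟨q, hq, by simp only [Prod.ext_iff]; constructor <;> omega⟩

lemma Fams_zero : Fams 0 0 = {∅} := by
  ext F
  rw [mem_Fams]
  simp only [Finset.mem_singleton]
  constructor
  · rintro ⟨-, hc⟩
    exact Finset.card_eq_zero.mp (by omega)
  · rintro rfl
    exact ⟨⟨by simp, by simp⟩, by simp⟩

lemma card_Fams_catalan : ∀ m : ℕ, (Fams 0 m).card = catalan m := by
  intro m
  induction m using Nat.strong_induction_on with
  | _ m ih =>
    match m with
    | 0 => rw [Fams_zero]; simp [catalan_zero]
    | m + 1 =>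
      rw [card_Fams_succ, catalan_succ', Finset.Nat.sum_antidiagonal_eq_sum_range_succ_mk]
      apply Finset.sum_congr rfl
      intro x hx
      simp only [Finset.mem_range] at hx
      have h1 : (Fams 0 x).card = catalan x := ih x (by omega)
      have h2 : (Fams (x + 1) (m + 1)).card = catalan (m - x) := by
        have hs : (Fams (0 + (x + 1)) ((m - x) + (x + 1))).card = (Fams 0 (m - x)).card :=
          card_Fams_shift 0 (m - x) (x + 1)
        have he1 : 0 + (x + 1) = x + 1 := by omega
        have he2 : (m - x) + (x + 1) = m + 1 := by omega
        rw [he1, he2] at hs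
        rw [hs]
        exact ih (m - x) (by omega)
      rw [h1, h2]


lemma Tubing.ext' {V : Type*} {G : SimpleGraph V} {T U : Tubing G}
    (h : T.tubes = U.tubes) : T = U := by
  cases T; cases U; simp only at h; subst h; rfl

noncomputable def eIv {n : ℕ} (s : Set (Fin n)) : ℕ × ℕ :=
  (sInf (Fin.val '' s), sSup (Fin.val '' s))

lemma val_image_IvS {n a b : ℕ} (h2 : b < n) :
    Fin.val '' (IvS a b : Set (Fin n)) = Set.Icc a b := by
  ext k
  constructor
  · rintro ⟨v, ⟨hv1, hv2⟩, rfl⟩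
    exact ⟨hv1, hv2⟩
  · rintro ⟨hk1, hk2⟩
    exact ⟨⟨k, by omega⟩, ⟨hk1, hk2⟩, rfl⟩

lemma eIv_IvS {n a b : ℕ} (h1 : a ≤ b) (h2 : b < n) :
    eIv (IvS a b : Set (Fin n)) = (a, b) := by
  unfold eIv
  rw [val_image_IvS h2, csInf_Icc h1, csSup_Icc h1]

section Bridge

variable {n : ℕ}

/-- the tubes of a tubing, as a finset of interval endpoints -/
noncomputable def Ftub (T : Tubing (pathGraph n)) : Finset (ℕ × ℕ) :=
  (T.tubes.toFinite.toFinset).image eIv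

lemma tube_spec (T : Tubing (pathGraph n)) {s : Set (Fin n)} (hs : s ∈ T.tubes) :
    (eIv s).1 ≤ (eIv s).2 ∧ (eIv s).2 < n ∧ s = IvS (eIv s).1 (eIv s).2 := by
  obtain ⟨⟨a, b⟩, h1, h2, rfl⟩ := (tube_iff s).mp (T.htube s hs)
  rw [eIv_IvS h1 h2]
  exact ⟨h1, h2, rfl⟩

lemma mem_Ftub {T : Tubing (pathGraph n)} {q : ℕ × ℕ} :
    q ∈ Ftub T ↔ ∃ s ∈ T.tubes, eIv s = q := by
  unfold Ftub
  simp only [Finset.mem_image, Set.Finite.mem_toFinset]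

lemma Ftub_mem_Fams (T : Tubing (pathGraph n)) (hT : T.tubes.ncard = n) :
    Ftub T ∈ Fams 0 n := by
  classical
  apply mem_Fams.mpr
  have hbound : ∀ q ∈ Ftub T, 0 ≤ q.1 ∧ q.1 ≤ q.2 ∧ q.2 < n := by
    intro q hq
    obtain ⟨s, hs, rfl⟩ := mem_Ftub.mp hq
    obtain ⟨h1, h2, _⟩ := tube_spec T hs
    exact ⟨Nat.zero_le _, h1, h2⟩
  refine ⟨⟨hbound, ?_⟩, ?_⟩
  · intro p hp q hq
    obtain ⟨s, hs, rfl⟩ := mem_Ftub.mp hp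
    obtain ⟨t, ht, rfl⟩ := mem_Ftub.mp hq
    obtain ⟨hs1, hs2, hsE⟩ := tube_spec T hs
    obtain ⟨ht1, ht2, htE⟩ := tube_spec T ht
    rcases T.hcompat s hs t ht with h' | h' | h'
    · left; left
      rw [hsE, htE] at h'
      exact (IvS_subset_iff hs1 hs2).mp h'
    · left; right
      rw [hsE, htE] at h'
      exact (IvS_subset_iff ht1 ht2).mp h'
    · right
      rw [hsE, htE] at h'
      unfold sep
      by_contra hc
      push_neg at hc
      exact h' ((IvS_union_conn_iff hs1 hs2 ht1 ht2).mpr (by omega))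
  · unfold Ftub
    rw [Finset.card_image_of_injOn, ← Set.ncard_eq_toFinset_card _ T.tubes.toFinite, hT]
    · omega
    · intro s hs t ht he
      simp only [Finset.mem_coe, Set.Finite.mem_toFinset] at hs ht
      obtain ⟨_, _, hsE⟩ := tube_spec T hs
      obtain ⟨_, _, htE⟩ := tube_spec T ht
      rw [hsE, htE, he]

lemma univ_eq_IvS (hn : 0 < n) : (Set.univ : Set (Fin n)) = IvS 0 (n - 1) := by
  ext v
  simp only [Set.mem_univ, true_iff]
  exact ⟨Nat.zero_le _, by have := v.isLt; omega⟩

lemma top_mem_Fams {F : Finset (ℕ × ℕ)} (hn : 0 < n) (hF : F ∈ Fams 0 n) :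
    (0, n - 1) ∈ F := by
  obtain ⟨m, rfl⟩ : ∃ m, n = m + 1 := ⟨n - 1, by omega⟩
  obtain ⟨x, _, htop, _⟩ := top_mem_split hF
  simpa using htop

def TsetF (F : Finset (ℕ × ℕ)) : Set (Set (Fin n)) := {s | ∃ p ∈ F, s = IvS p.1 p.2}

lemma TsetF_ncard {F : Finset (ℕ × ℕ)} (hF : F ∈ Fams 0 n) :
    (TsetF (n := n) F).ncard = n := by
  obtain ⟨hIs, hcard⟩ := mem_Fams.mp hF
  have heq : TsetF (n := n) F = (fun p : ℕ × ℕ => (IvS p.1 p.2 : Set (Fin n))) '' ↑F := by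
    ext s
    simp only [TsetF, Set.mem_setOf_eq, Set.mem_image, Finset.mem_coe]
    constructor
    · rintro ⟨p, hp, rfl⟩; exact ⟨p, hp, rfl⟩
    · rintro ⟨p, hp, rfl⟩; exact ⟨p, hp, rfl⟩
  rw [heq, Set.ncard_image_of_injOn, Set.ncard_coe_finset, hcard]
  · omega
  · rintro p hp q hq he
    simp only [Finset.mem_coe] at hp hq
    obtain ⟨_, hp2, hp3⟩ := hIs.1 p hp
    obtain ⟨_, hq2, hq3⟩ := hIs.1 q hq
    obtain ⟨h1, h2⟩ := IvS_inj hp2 hp3 hq2 hq3 he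
    exact Prod.ext h1 h2

def ofFamTubing (hn : 0 < n) (F : Finset (ℕ × ℕ)) (hF : F ∈ Fams 0 n) :
    Tubing (pathGraph n) where
  tubes := TsetF F
  htube := by
    rintro s ⟨p, hp, rfl⟩
    obtain ⟨_, h2, h3⟩ := (mem_Fams.mp hF).1.1 p hp
    exact (tube_iff _).mpr ⟨p, h2, h3, rfl⟩
  hcompat := by
    rintro s ⟨p, hp, rfl⟩ t ⟨q, hq, rfl⟩
    obtain ⟨hIs, -⟩ := mem_Fams.mp hF
    obtain ⟨_, hp2, hp3⟩ := hIs.1 p hp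
    obtain ⟨_, hq2, hq3⟩ := hIs.1 q hq
    rcases hIs.2 p hp q hq with hne | hse
    · rcases hne with ⟨h1, h2⟩ | ⟨h1, h2⟩
      · exact Or.inl ((IvS_subset_iff hp2 hp3).mpr ⟨h1, h2⟩)
      · exact Or.inr (Or.inl ((IvS_subset_iff hq2 hq3).mpr ⟨h1, h2⟩))
    · refine Or.inr (Or.inr ?_)
      rw [IvS_union_conn_iff hp2 hp3 hq2 hq3]
      unfold sep at hse
      omega
  huniv := ⟨(0, n - 1), top_mem_Fams hn hF, univ_eq_IvS hn⟩

noncomputable def ofFam (hn : 0 < n) (F : {F // F ∈ Fams 0 n}) :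
    {T : Tubing (pathGraph n) // T.tubes.ncard = n} :=
  ⟨ofFamTubing hn F.1 F.2, TsetF_ncard F.2⟩

noncomputable def toFam (T : {T : Tubing (pathGraph n) // T.tubes.ncard = n}) :
    {F // F ∈ Fams 0 n} :=
  ⟨Ftub T.1, Ftub_mem_Fams T.1 T.2⟩

lemma path_count (hn : 0 < n) :
    Nat.card {T : Tubing (pathGraph n) // T.tubes.ncard = n} = catalan n := by
  classical
  have he : Nat.card {T : Tubing (pathGraph n) // T.tubes.ncard = n} =
      Nat.card {F // F ∈ Fams 0 n} := by
    apply Nat.card_congr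
    refine ⟨toFam, ofFam hn, ?_, ?_⟩
    · intro T
      apply Subtype.ext
      apply Tubing.ext'
      show TsetF (Ftub T.1) = T.1.tubes
      ext s
      simp only [TsetF, Set.mem_setOf_eq]
      constructor
      · rintro ⟨p, hp, rfl⟩
        obtain ⟨t, ht, rfl⟩ := mem_Ftub.mp hp
        obtain ⟨_, _, htE⟩ := tube_spec T.1 ht
        rw [← htE]; exact ht
      · intro hs
        obtain ⟨h1, h2, hsE⟩ := tube_spec T.1 hs
        exact ⟨eIv s, mem_Ftub.mpr ⟨s, hs, rfl⟩, hsE⟩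
    · intro F
      apply Subtype.ext
      show Ftub (ofFamTubing hn F.1 F.2) = F.1
      obtain ⟨hIs, hcard⟩ := mem_Fams.mp F.2
      ext q
      rw [mem_Ftub]
      constructor
      · rintro ⟨s, hs, rfl⟩
        obtain ⟨p, hp, rfl⟩ : ∃ p ∈ F.1, s = IvS p.1 p.2 := hs
        obtain ⟨_, h2, h3⟩ := hIs.1 p hp
        rw [eIv_IvS h2 h3]
        exact hp
      · intro hq
        obtain ⟨_, h2, h3⟩ := hIs.1 q hq
        refine ⟨IvS q.1 q.2, ⟨q, hq, rfl⟩, by rw [eIv_IvS h2 h3]⟩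
  rw [he, Nat.card_eq_finsetCard, card_Fams_catalan]

end Bridge

section Perm

variable {n : ℕ}

lemma top_induce_connected (s : Set (Fin n)) (hne : s.Nonempty) :
    ((⊤ : SimpleGraph (Fin n)).induce s).Connected := by
  rw [SimpleGraph.connected_iff]
  refine ⟨fun x y => ?_, hne.to_subtype⟩
  rcases eq_or_ne x y with rfl | hxy
  · exact SimpleGraph.Reachable.refl x
  · exact SimpleGraph.Adj.reachable (by
      simp only [SimpleGraph.comap_adj, SimpleGraph.top_adj]
      exact Subtype.coe_ne_coe.mpr hxy)

lemma ncard_Iic (k : Fin n) : (Set.Iic k).ncard = k.val + 1 := by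
  rw [← Finset.coe_Iic, Set.ncard_coe_finset, Fin.card_Iic]

def permTubing (hn : 0 < n) (σ : Equiv.Perm (Fin n)) : Tubing (⊤ : SimpleGraph (Fin n)) where
  tubes := {S | ∃ k : Fin n, S = σ '' Set.Iic k}
  htube := by
    rintro s ⟨k, rfl⟩
    exact ⟨⟨σ k, ⟨k, le_refl k, rfl⟩⟩, top_induce_connected _ ⟨σ k, ⟨k, le_refl k, rfl⟩⟩⟩
  hcompat := by
    rintro s ⟨k, rfl⟩ t ⟨l, rfl⟩
    rcases le_total k l with h | h
    · exact Or.inl (Set.image_mono (Set.Iic_subset_Iic.mpr h))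
    · exact Or.inr (Or.inl (Set.image_mono (Set.Iic_subset_Iic.mpr h)))
  huniv := by
    refine ⟨⟨n - 1, by omega⟩, ?_⟩
    have h1 : Set.Iic (⟨n - 1, by omega⟩ : Fin n) = Set.univ := by
      ext v
      simp only [Set.mem_Iic, Set.mem_univ, iff_true]
      exact Fin.le_iff_val_le_val.mpr (by have := v.isLt; simp only [Fin.val_mk]; omega)
    rw [h1, Set.image_univ, Equiv.range_eq_univ]

lemma permTubing_ncard (hn : 0 < n) (σ : Equiv.Perm (Fin n)) :
    (permTubing hn σ).tubes.ncard = n := by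
  have h1 : (permTubing hn σ).tubes = Set.range (fun k : Fin n => σ '' Set.Iic k) := by
    ext s
    simp only [permTubing, Set.mem_setOf_eq, Set.mem_range]
    exact ⟨fun ⟨k, h⟩ => ⟨k, h.symm⟩, fun ⟨k, h⟩ => ⟨k, h.symm⟩⟩
  have hinj : Function.Injective (fun k : Fin n => σ '' Set.Iic k) := by
    intro k l he
    simp only at he
    have h2 : σ k ∈ σ '' Set.Iic l := he ▸ ⟨k, le_refl k, rfl⟩
    have h3 : σ l ∈ σ '' Set.Iic k := he ▸ ⟨l, le_refl l, rfl⟩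
    obtain ⟨k', hk', hk2⟩ := h2
    obtain ⟨l', hl', hl2⟩ := h3
    have e1 : k' = k := σ.injective hk2
    have e2 : l' = l := σ.injective hl2
    subst e1; subst e2
    exact le_antisymm (Set.mem_Iic.mp hk') (Set.mem_Iic.mp hl')
  rw [h1, ← Set.image_univ, Set.ncard_image_of_injective _ hinj, Set.ncard_univ,
    Nat.card_eq_fintype_card, Fintype.card_fin]

lemma perm_count (hn : 0 < n) :
    Nat.card {T : Tubing (⊤ : SimpleGraph (Fin n)) // T.tubes.ncard = n} = n.factorial := by
  classical
  have hbij : Function.Bijective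
      (fun σ : Equiv.Perm (Fin n) =>
        (⟨permTubing hn σ, permTubing_ncard hn σ⟩ :
          {T : Tubing (⊤ : SimpleGraph (Fin n)) // T.tubes.ncard = n})) := by
    constructor
    · intro σ τ he
      have htubes : (permTubing hn σ).tubes = (permTubing hn τ).tubes := by
        simp only [Subtype.mk.injEq] at he
        rw [he]
      have hIic : ∀ k : Fin n, σ '' Set.Iic k = τ '' Set.Iic k := by
        intro k
        have h1 : σ '' Set.Iic k ∈ (permTubing hn τ).tubes := htubes ▸ ⟨k, rfl⟩
        obtain ⟨j, hj⟩ := h1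
        have h2 : (Set.Iic k).ncard = (Set.Iic j).ncard := by
          rw [← Set.ncard_image_of_injective _ σ.injective, hj,
            Set.ncard_image_of_injective _ τ.injective]
        rw [ncard_Iic, ncard_Iic] at h2
        have : j = k := Fin.ext (by omega)
        rw [hj, this]
      have hval : ∀ j : ℕ, ∀ hj : j < n, σ ⟨j, hj⟩ = τ ⟨j, hj⟩ := by
        intro j
        induction j using Nat.strong_induction_on with
        | _ j ih =>
          intro hj
          have h1 : σ ⟨j, hj⟩ ∈ τ '' Set.Iic ⟨j, hj⟩ :=
            hIic ⟨j, hj⟩ ▸ ⟨⟨j, hj⟩, Set.mem_Iic.mpr (le_refl _), rfl⟩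
          obtain ⟨i, hi, hi2⟩ := h1
          rcases Nat.lt_or_ge i.val j with h' | h'
          · exfalso
            have h3 : τ i = σ i := by
              have := ih i.val h' (by omega)
              simpa [Fin.eta] using this.symm
            rw [h3] at hi2
            have := σ.injective hi2
            rw [this] at h'
            simp at h'
          · have h4 : i = ⟨j, hj⟩ := Fin.ext (by
              have := Fin.le_iff_val_le_val.mp hi
              simp only [Fin.val_mk] at this ⊢
              omega)
            rw [← h4, hi2, h4]
      exact Equiv.ext fun k => by
        have := hval k.val k.isLt
        simpa [Fin.eta] using this
    · rintro ⟨T, hT⟩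
      -- build the permutation from the chain
      have hchain : ∀ s ∈ T.tubes, ∀ t ∈ T.tubes, s ⊆ t ∨ t ⊆ s := by
        intro s hs t ht
        rcases T.hcompat s hs t ht with h | h | h
        · exact Or.inl h
        · exact Or.inr h
        · exfalso
          exact h (top_induce_connected _ ((T.htube s hs).1.mono Set.subset_union_left))
      have hmem_card : ∀ s ∈ T.tubes, s.ncard ∈ Finset.Icc 1 n := by
        intro s hs
        simp only [Finset.mem_Icc]
        constructor
        · exact (Set.ncard_pos (Set.toFinite s)).mpr (T.htube s hs).1
        · calc s.ncard ≤ (Set.univ : Set (Fin n)).ncard :=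
                Set.ncard_le_ncard (Set.subset_univ s) (Set.toFinite _)
          _ = Nat.card (Fin n) := Set.ncard_univ _
          _ = n := by rw [Nat.card_eq_fintype_card, Fintype.card_fin]
      have hinj_card : ∀ s ∈ T.tubes, ∀ t ∈ T.tubes, s.ncard = t.ncard → s = t := by
        intro s hs t ht he
        rcases hchain s hs t ht with h | h
        · exact Set.eq_of_subset_of_ncard_le h (by omega) (Set.toFinite t)
        · exact (Set.eq_of_subset_of_ncard_le h (by omega) (Set.toFinite s)).symm
      -- the image of ncard on tubes is all of Icc 1 n
      set Tf := T.tubes.toFinite.toFinset with hTf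
      have hTfcard : Tf.card = n := by
        rw [hTf, ← Set.ncard_eq_toFinset_card _ T.tubes.toFinite, hT]
      have himage : Tf.image Set.ncard = Finset.Icc 1 n := by
        apply Finset.eq_of_subset_of_card_le
        · intro k hk
          obtain ⟨s, hs, rfl⟩ := Finset.mem_image.mp hk
          exact hmem_card s (by rwa [hTf, Set.Finite.mem_toFinset] at hs)
        · rw [Nat.card_Icc]
          have : (Tf.image Set.ncard).card = Tf.card := by
            apply Finset.card_image_of_injOn
            intro s hs t ht he
            rw [hTf, Finset.mem_coe, Set.Finite.mem_toFinset] at hs ht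
            exact hinj_card s hs t ht he
          omega
      have hSex : ∀ k : ℕ, k ∈ Finset.Icc 1 n → ∃ s, s ∈ T.tubes ∧ s.ncard = k := by
        intro k hk
        rw [← himage] at hk
        obtain ⟨s, hs, he⟩ := Finset.mem_image.mp hk
        exact ⟨s, by rwa [hTf, Set.Finite.mem_toFinset] at hs, he⟩
      choose! S hS1 hS2 using hSex
      set S' : ℕ → Set (Fin n) := fun k => if k = 0 then ∅ else S k with hS'
      have hS'mem : ∀ k, 1 ≤ k → k ≤ n → S' k ∈ T.tubes ∧ (S' k).ncard = k := by
        intro k h1 h2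
        have hk : k ∈ Finset.Icc 1 n := Finset.mem_Icc.mpr ⟨h1, h2⟩
        simp only [hS', if_neg (by omega : ¬ k = 0)]
        exact ⟨hS1 k hk, hS2 k hk⟩
      have hS'card : ∀ k, k ≤ n → (S' k).ncard = k := by
        intro k hk
        rcases Nat.eq_zero_or_pos k with rfl | h
        · simp [hS']
        · exact (hS'mem k h hk).2
      have hmono : ∀ k l, k ≤ l → l ≤ n → S' k ⊆ S' l := by
        intro k l hkl hl
        rcases Nat.eq_zero_or_pos k with rfl | hk
        · simp [hS']
        · rcases hchain _ (hS'mem k hk (by omega)).1 _ (hS'mem l (by omega) hl).1 with h | h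
          · exact h
          · have := Set.ncard_le_ncard h (Set.toFinite _)
            rw [hS'card k (by omega), hS'card l hl] at this
            have : k = l := by omega
            rw [this]
      have hdiff : ∀ k : Fin n, ∃ x, x ∈ S' (k.val + 1) ∧ x ∉ S' k.val := by
        intro k
        by_contra hc
        push_neg at hc
        have hsub : S' (k.val + 1) ⊆ S' k.val := fun x hx => by
          by_contra hx'
          exact hx' (hc x hx) |>.elim
        have := Set.ncard_le_ncard hsub (Set.toFinite _)
        rw [hS'card (k.val + 1) k.isLt, hS'card k.val (by omega)] at this
        omega
      choose σf hσ1 hσ2 using hdiff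
      have hσinj : Function.Injective σf := by
        intro k l he
        by_contra hne
        rcases Fin.lt_or_lt_of_ne hne with h' | h'
        · have h1 : σf k ∈ S' l.val :=
            hmono (k.val + 1) l.val (by exact h') (by omega) (hσ1 k)
          rw [he] at h1
          exact hσ2 l h1
        · have h1 : σf l ∈ S' k.val :=
            hmono (l.val + 1) k.val (by exact h') (by omega) (hσ1 l)
          rw [← he] at h1
          exact hσ2 k h1
      set σ : Equiv.Perm (Fin n) :=
        Equiv.ofBijective σf (Finite.injective_iff_bijective.mp hσinj) with hσdef
      have hσap : ∀ k, σ k = σf k := fun k => rfl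
      refine ⟨σ, ?_⟩
      apply Subtype.ext
      apply Tubing.ext'
      show (permTubing hn σ).tubes = T.tubes
      -- first : insert lemma
      have hins : ∀ j : ℕ, ∀ hj : j < n, S' (j + 1) = insert (σf ⟨j, hj⟩) (S' j) := by
        intro j hj
        have h1 : insert (σf ⟨j, hj⟩) (S' j) ⊆ S' (j + 1) := by
          apply Set.insert_subset
          · exact hσ1 ⟨j, hj⟩
          · exact hmono j (j + 1) (by omega) (by omega)
        apply (Set.eq_of_subset_of_ncard_le h1 ?_ (Set.toFinite _)).symm
        rw [Set.ncard_insert_of_notMem (hσ2 ⟨j, hj⟩) (Set.toFinite _),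
          hS'card (j + 1) (by omega), hS'card j (by omega)]
      have hIic : ∀ j : ℕ, ∀ hj : j < n, σf '' Set.Iic ⟨j, hj⟩ = S' (j + 1) := by
        intro j
        induction j with
        | zero =>
          intro hj
          have h1 : Set.Iic (⟨0, hj⟩ : Fin n) = {⟨0, hj⟩} := by
            ext v
            simp only [Set.mem_Iic, Set.mem_singleton_iff]
            constructor
            · intro h; exact Fin.ext (by have := Fin.le_iff_val_le_val.mp h; simpa using this)
            · rintro rfl; exact le_refl _
          rw [h1, Set.image_singleton, hins 0 hj]
          simp [hS']
        | succ j ih =>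
          intro hj
          have h1 : Set.Iic (⟨j + 1, hj⟩ : Fin n) =
              insert ⟨j + 1, hj⟩ (Set.Iic ⟨j, by omega⟩) := by
            ext v
            simp only [Set.mem_Iic, Set.mem_insert_iff, Set.mem_Iic]
            rw [Fin.le_iff_val_le_val, Fin.le_iff_val_le_val]
            simp only [Fin.val_mk]
            constructor
            · intro h
              rcases Nat.lt_or_ge v.val (j + 1) with h' | h'
              · exact Or.inr (by omega)
              · exact Or.inl (Fin.ext (by simp only [Fin.val_mk]; omega))
            · rintro (rfl | h)
              · simp
              · omega
          rw [h1, Set.image_insert_eq, ih (by omega), ← hins (j + 1) hj]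
      ext s
      simp only [permTubing, Set.mem_setOf_eq]
      constructor
      · rintro ⟨k, rfl⟩
        have := hIic k.val k.isLt
        simp only [Fin.eta] at this
        rw [show (σ '' Set.Iic k) = σf '' Set.Iic k from rfl, this]
        exact (hS'mem (k.val + 1) (by omega) k.isLt).1
      · intro hs
        have hk := hmem_card s hs
        simp only [Finset.mem_Icc] at hk
        have hseq : s = S' s.ncard := by
          apply hinj_card s hs
          · exact (hS'mem s.ncard hk.1 hk.2).1
          · rw [hS'card s.ncard hk.2]
        refine ⟨⟨s.ncard - 1, by omega⟩, ?_⟩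
        have := hIic (s.ncard - 1) (by omega)
        rw [show (σ '' Set.Iic ⟨s.ncard - 1, by omega⟩) =
          σf '' Set.Iic ⟨s.ncard - 1, by omega⟩ from rfl, this]
        have hfix : s.ncard - 1 + 1 = s.ncard := by omega
        rw [hfix, ← hseq]
  rw [Nat.card_eq_of_bijective _ hbij |>.symm, Nat.card_eq_fintype_card]
  simp [Fintype.card_perm, Fintype.card_fin]

end Perm


/-- The number of maximal tubings (`n`-tubings) of the complete graph on `n`
nodes is `n!` (vertices of the permutohedron), and the number of maximal
tubings of the path graph on `n` nodes is the Catalan number `C_n`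
(vertices of the associahedron). -/
theorem card_maximal_tubings (n : ℕ) (hn : 0 < n) :
    Nat.card {T : Tubing (⊤ : SimpleGraph (Fin n)) // T.tubes.ncard = n} =
      n.factorial ∧
    Nat.card {T : Tubing (SimpleGraph.pathGraph n) // T.tubes.ncard = n} =
      catalan n := by
  exact ⟨perm_count hn, path_count hn⟩
end
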